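/- arXiv:1007.4679 — 6 statements merged into one kernel-verified Lean document; each statement's English description precedes it below -/
import Mathlib

section
/- Let a be a positive finite-rank operator on a Hilbert space H. Then a is a finite sum of (orthogonal) projections if and only if tr(a) ≥ rank(a) and tr(a) is a (nonnegative) integer. -/
set_option linter.unusedSectionVars false
set_option maxHeartbeats 1000000

open scoped InnerProductSpace
open ContinuousLinearMap

variable {H : Type*} [NormedAddCommGroup H] [InnerProductSpace ℂ H] [CompleteSpace H]

/-- An (orthogonal) projection in `B(H)`: a self-adjoint idempotent. -/
def IsProjOp (p : H →L[ℂ] H) : Prop := IsSelfAdjoint p ∧ p * p = p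

/-- The range (support) projection of an operator: the orthogonal projection onto the
closure of its range. -/
noncomputable def rangeProjection (b : H →L[ℂ] H) : H →L[ℂ] H :=
  ((LinearMap.range (b : H →ₗ[ℂ] H)).topologicalClosure).subtypeL ∘L
    (Submodule.orthogonalProjectionOnto (LinearMap.range (b : H →ₗ[ℂ] H)).topologicalClosure)

/-- Murray–von Neumann subequivalence of projections. -/
def MvNSubequiv (p q : H →L[ℂ] H) : Prop :=
  ∃ v : H →L[ℂ] H, ContinuousLinearMap.adjoint v * v = p ∧ v * ContinuousLinearMap.adjoint v ≤ q

/-- Murray–von Neumann equivalence of projections. -/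
def MvNEquiv (p q : H →L[ℂ] H) : Prop :=
  ∃ v : H →L[ℂ] H, ContinuousLinearMap.adjoint v * v = p ∧ v * ContinuousLinearMap.adjoint v = q

/-- The trace of a (positive) operator computed along a Hilbert basis. -/
noncomputable def traceAlong {ι : Type*} (b : HilbertBasis ι ℂ H) (a : H →L[ℂ] H) : ℝ :=
  ∑' i, RCLike.re ⟪b i, a (b i)⟫_ℂ

/-- rank one operator `y ↦ ⟪x, y⟫ • x`. -/
noncomputable def rk1 (x : H) : H →L[ℂ] H := (innerSL ℂ x).smulRight x

lemma rk1_apply (x y : H) : rk1 x y = ⟪x, y⟫_ℂ • x := rfl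

lemma rk1_isSelfAdjoint (x : H) : IsSelfAdjoint (rk1 x) := by
  rw [ContinuousLinearMap.isSelfAdjoint_iff_isSymmetric]
  intro u v
  simp only [ContinuousLinearMap.coe_coe, rk1_apply, inner_smul_left, inner_smul_right,
    inner_conj_symm]
  ring

lemma rk1_isProjOp {x : H} (hx : ‖x‖ = 1) : IsProjOp (rk1 x) := by
  refine ⟨rk1_isSelfAdjoint x, ?_⟩
  ext y
  simp only [ContinuousLinearMap.mul_apply, rk1_apply, inner_smul_right, smul_smul]
  rw [inner_self_eq_norm_sq_to_K, hx]
  push_cast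
  ring_nf

lemma hasSum_rk1 {ι : Type*} (b : HilbertBasis ι ℂ H) (x : H) :
    HasSum (fun i => RCLike.re ⟪b i, rk1 x (b i)⟫_ℂ) (‖x‖ ^ 2) := by
  have h := b.hasSum_inner_mul_inner x x
  have h2 := ((RCLike.hasSum_iff _ _).1 h).1
  have hx : RCLike.re ⟪x, x⟫_ℂ = ‖x‖ ^ 2 := by
    exact inner_self_eq_norm_sq x
  rw [hx] at h2
  convert h2 using 2 with i
  simp [rk1_apply, inner_smul_right, mul_comm]

lemma traceAlong_sum_rk1 {ι κ : Type*} [Fintype κ] (b : HilbertBasis ι ℂ H)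
    (c : κ → ℝ) (x : κ → H) (hx : ∀ k, ‖x k‖ = 1) :
    traceAlong b (∑ k, (c k : ℂ) • rk1 (x k)) = ∑ k, c k := by
  have hpt : ∀ i, RCLike.re ⟪b i, (∑ k, (c k : ℂ) • rk1 (x k)) (b i)⟫_ℂ
      = ∑ k, c k * RCLike.re ⟪b i, rk1 (x k) (b i)⟫_ℂ := by
    intro i
    rw [ContinuousLinearMap.sum_apply, inner_sum, map_sum]
    refine Finset.sum_congr rfl fun k _ => ?_
    rw [ContinuousLinearMap.smul_apply, inner_smul_right]
    exact Complex.re_ofReal_mul _ _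
  have hs : HasSum (fun i => ∑ k, c k * RCLike.re ⟪b i, rk1 (x k) (b i)⟫_ℂ)
      (∑ k, c k * ‖x k‖ ^ 2) :=
    hasSum_sum fun k _ => (hasSum_rk1 b (x k)).mul_left (c k)
  have hval : (∑ k, c k * ‖x k‖ ^ 2) = ∑ k, c k :=
    Finset.sum_congr rfl fun k _ => by rw [hx k]; ring
  rw [hval] at hs
  rw [show (fun i => ∑ k, c k * RCLike.re ⟪b i, rk1 (x k) (b i)⟫_ℂ)
      = (fun i => RCLike.re ⟪b i, (∑ k, (c k : ℂ) • rk1 (x k)) (b i)⟫_ℂ) from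
    funext fun i => (hpt i).symm] at hs
  exact hs.tsum_eq

lemma finrank_range_sum_rk1_le {κ : Type*} [Fintype κ] (c : κ → ℂ) (x : κ → H) :
    Module.finrank ℂ (LinearMap.range ((∑ k, c k • rk1 (x k) : H →L[ℂ] H) : H →ₗ[ℂ] H)) ≤ Fintype.card κ := by
  classical
  have hle : LinearMap.range ((∑ k, c k • rk1 (x k) : H →L[ℂ] H) : H →ₗ[ℂ] H)
      ≤ Submodule.span ℂ (Set.range x) := by
    rintro u hu
    obtain ⟨y, rfl⟩ := hu
    simp only [ContinuousLinearMap.coe_coe, ContinuousLinearMap.sum_apply,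
      ContinuousLinearMap.smul_apply, rk1_apply]
    exact Submodule.sum_mem _ fun k _ => Submodule.smul_mem _ _
      (Submodule.smul_mem _ _ (Submodule.subset_span ⟨k, rfl⟩))
  haveI : FiniteDimensional ℂ (Submodule.span ℂ (Set.range x)) :=
    FiniteDimensional.span_of_finite ℂ (Set.finite_range x)
  haveI : Fintype (Set.range x) := Set.fintypeRange x
  calc Module.finrank ℂ (LinearMap.range ((∑ k, c k • rk1 (x k) : H →L[ℂ] H) : H →ₗ[ℂ] H))
      ≤ Module.finrank ℂ (Submodule.span ℂ (Set.range x)) := Submodule.finrank_mono hle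
    _ ≤ (Set.range x).toFinset.card := finrank_span_le_card _
    _ ≤ Fintype.card κ := by
        rw [Set.toFinset_range]
        exact (Finset.card_image_le).trans (by simp)


/-- a self-adjoint operator kills the orthogonal complement of its range. -/
lemma apply_eq_zero_of_mem_orthogonal_range {a : H →L[ℂ] H} (hsa : IsSelfAdjoint a)
    {z : H} (hz : z ∈ (LinearMap.range (a : H →ₗ[ℂ] H))ᗮ) : a z = 0 := by
  have hsym := (ContinuousLinearMap.isSelfAdjoint_iff_isSymmetric).1 hsa
  have h3 : ⟪z, a (a z)⟫_ℂ = 0 :=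
    inner_eq_zero_symm.mpr (hz _ (LinearMap.mem_range_self _ (a z)))
  exact inner_self_eq_zero.mp ((hsym z (a z)).trans h3)

lemma exists_spectral (a : H →L[ℂ] H) (ha : a.IsPositive)
    (hfin : FiniteDimensional ℂ (LinearMap.range (a : H →ₗ[ℂ] H))) :
    ∃ (v : Fin (Module.finrank ℂ (LinearMap.range (a : H →ₗ[ℂ] H))) → H)
      (μ : Fin (Module.finrank ℂ (LinearMap.range (a : H →ₗ[ℂ] H))) → ℝ),
      Orthonormal ℂ v ∧ (∀ k, 0 < μ k) ∧ a = ∑ k, (μ k : ℂ) • rk1 (v k) := by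
  classical
  set V : Submodule ℂ H := LinearMap.range (a : H →ₗ[ℂ] H) with hV
  haveI : FiniteDimensional ℂ V := hfin
  have hmem : ∀ x ∈ (⊤ : Submodule ℂ H), (a : H →ₗ[ℂ] H) x ∈ V := fun x _ =>
    LinearMap.mem_range_self _ x
  -- restriction of a to V
  have hmemV : ∀ x ∈ V, (a : H →ₗ[ℂ] H) x ∈ V := fun x _ => LinearMap.mem_range_self _ x
  set S : V →ₗ[ℂ] V := (a : H →ₗ[ℂ] H).restrict hmemV with hS
  have hsym := ha.1
  have hSsym : S.IsSymmetric := by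
    intro u w
    have : ((S u : H)) = a (u : H) := LinearMap.restrict_coe_apply _ _ _
    rw [Submodule.coe_inner, Submodule.coe_inner, LinearMap.restrict_coe_apply,
      LinearMap.restrict_coe_apply]
    exact hsym (u : H) (w : H)
  set e := hSsym.eigenvectorBasis rfl with he
  set μ := hSsym.eigenvalues (rfl : Module.finrank ℂ V = _) with hμ
  set v : Fin (Module.finrank ℂ V) → H := fun k => (e k : H) with hv
  have hon : Orthonormal ℂ v := by
    rw [orthonormal_iff_ite]
    intro i j
    have := (orthonormal_iff_ite (𝕜 := ℂ)).1 e.orthonormal i j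
    rw [Submodule.coe_inner] at this
    exact this
  have heig : ∀ k, a (v k) = (μ k : ℂ) • v k := by
    intro k
    have h1 : ((S (e k) : H)) = a (v k) := LinearMap.restrict_coe_apply _ _ _
    have h2 : S (e k) = (μ k : ℂ) • e k := hSsym.apply_eigenvectorBasis rfl k
    rw [← h1, h2]
    rfl
  have hnorm : ∀ k, ‖v k‖ = 1 := fun k => hon.1 k
  have hpos : ∀ k, 0 < μ k := by
    intro k
    have h0 : 0 ≤ a.reApplyInnerSelf (v k) := ha.2 (v k)
    have hre : a.reApplyInnerSelf (v k) = μ k := by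
      rw [ContinuousLinearMap.reApplyInnerSelf_apply, heig k, inner_smul_left,
        inner_self_eq_norm_sq_to_K, hnorm k]
      simp
    rw [hre] at h0
    rcases h0.lt_or_eq with h | h
    · exact h
    · exfalso
      have hz : a (v k) = 0 := by rw [heig k, ← h]; simp
      obtain ⟨u, hu⟩ : ∃ u, a u = v k := (e k).2
      have hvz : ⟪v k, v k⟫_ℂ = 0 := by
        rw [← hu]
        refine (hsym u (a u)).trans ?_
        rw [hu]
        show ⟪u, a (v k)⟫_ℂ = 0
        rw [hz, inner_zero_right]
      have h1 : v k = 0 := inner_self_eq_zero.mp hvz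
      have hn := hnorm k
      rw [h1, norm_zero] at hn
      exact zero_ne_one hn
  refine ⟨v, μ, hon, hpos, ?_⟩
  ext x
  obtain ⟨y, hy, z, hz, rfl⟩ := Submodule.exists_add_mem_mem_orthogonal (K := V) x
  have haz : a z = 0 := apply_eq_zero_of_mem_orthogonal_range ha.isSelfAdjoint hz
  have hrz : ∀ k, rk1 (v k) z = 0 := by
    intro k
    rw [rk1_apply, hz (v k) (e k).2, zero_smul]
  have hay : a y = ∑ k, (μ k : ℂ) • rk1 (v k) y := by
    set Y : V := ⟨y, hy⟩ with hY
    have hexp : (Y : H) = ∑ k, ⟪v k, y⟫_ℂ • v k := by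
      conv_lhs => rw [← e.sum_repr Y]
      rw [Submodule.coe_sum]
      refine Finset.sum_congr rfl fun k _ => ?_
      rw [e.repr_apply_apply, Submodule.coe_smul, Submodule.coe_inner]
    calc a y = a (Y : H) := rfl
      _ = a (∑ k, ⟪v k, y⟫_ℂ • v k) := by rw [← hexp]
      _ = ∑ k, ⟪v k, y⟫_ℂ • a (v k) := by rw [map_sum]; simp [map_smul]
      _ = ∑ k, (μ k : ℂ) • rk1 (v k) y := by
          refine Finset.sum_congr rfl fun k _ => ?_
          rw [heig k, rk1_apply]
          rw [smul_comm]
  rw [map_add, haz, add_zero, ContinuousLinearMap.sum_apply]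
  rw [hay]
  refine Finset.sum_congr rfl fun k _ => ?_
  rw [ContinuousLinearMap.smul_apply, map_add, hrz k, add_zero]


lemma proj_fix {p : H →L[ℂ] H} (hp : IsProjOp p) {u : H} (hu : u ∈ LinearMap.range (p : H →ₗ[ℂ] H)) :
    p u = u := by
  obtain ⟨y, rfl⟩ := hu
  show p ((p : H →ₗ[ℂ] H) y) = _
  rw [ContinuousLinearMap.coe_coe]
  calc p (p y) = (p * p) y := rfl
    _ = p y := by rw [hp.2]

lemma proj_decomp (p : H →L[ℂ] H) (hp : IsProjOp p)
    (hfd : FiniteDimensional ℂ (LinearMap.range (p : H →ₗ[ℂ] H))) :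
    ∃ (d : ℕ) (w : Fin d → H), (∀ k, ‖w k‖ = 1) ∧ p = ∑ k, rk1 (w k) := by
  classical
  set W : Submodule ℂ H := LinearMap.range (p : H →ₗ[ℂ] H) with hW
  haveI : FiniteDimensional ℂ W := hfd
  set f := stdOrthonormalBasis ℂ W with hf
  set w : Fin (Module.finrank ℂ W) → H := fun k => (f k : H) with hw
  have hsym := (ContinuousLinearMap.isSelfAdjoint_iff_isSymmetric).1 hp.1
  have hnorm : ∀ k, ‖w k‖ = 1 := by
    intro k
    have := f.orthonormal.1 k
    exact this
  refine ⟨_, w, hnorm, ?_⟩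
  ext y
  have hmem : p y ∈ W := LinearMap.mem_range_self _ y
  set P : W := ⟨p y, hmem⟩ with hP
  have hexp : (P : H) = ∑ k, ⟪w k, p y⟫_ℂ • w k := by
    conv_lhs => rw [← f.sum_repr P]
    rw [Submodule.coe_sum]
    refine Finset.sum_congr rfl fun k _ => ?_
    rw [f.repr_apply_apply, Submodule.coe_smul, Submodule.coe_inner]
  have hfix : ∀ k, p (w k) = w k := fun k => proj_fix hp (f k).2
  calc p y = (P : H) := rfl
    _ = ∑ k, ⟪w k, p y⟫_ℂ • w k := hexp
    _ = ∑ k, ⟪w k, y⟫_ℂ • w k := by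
        refine Finset.sum_congr rfl fun k _ => ?_
        congr 1
        calc ⟪w k, p y⟫_ℂ = ⟪p (w k), y⟫_ℂ := (hsym (w k) y).symm
          _ = ⟪w k, y⟫_ℂ := by rw [hfix k]
    _ = (∑ k, rk1 (w k)) y := by
        rw [ContinuousLinearMap.sum_apply]
        exact Finset.sum_congr rfl fun k _ => (rk1_apply _ _).symm

lemma range_summand_le {n : ℕ} (a : H →L[ℂ] H) (ha : a.IsPositive)
    (hfin : FiniteDimensional ℂ (LinearMap.range (a : H →ₗ[ℂ] H))) (p : Fin n → H →L[ℂ] H)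
    (hproj : ∀ j, IsProjOp (p j)) (hsum : a = ∑ j, p j) (j : Fin n) :
    LinearMap.range (p j : H →ₗ[ℂ] H) ≤ LinearMap.range (a : H →ₗ[ℂ] H) := by
  haveI : FiniteDimensional ℂ (LinearMap.range (a : H →ₗ[ℂ] H)) := hfin
  have hsymj : ∀ i : Fin n, ((p i : H →ₗ[ℂ] H)).IsSymmetric := fun i =>
    (ContinuousLinearMap.isSelfAdjoint_iff_isSymmetric).1 (hproj i).1
  have hker : ∀ z ∈ (LinearMap.range (a : H →ₗ[ℂ] H))ᗮ, ∀ i, p i z = 0 := by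
    intro z hz i
    have haz : a z = 0 := apply_eq_zero_of_mem_orthogonal_range ha.isSelfAdjoint hz
    have h1 : (0 : ℂ) = ∑ i, ⟪p i z, p i z⟫_ℂ := by
      calc (0 : ℂ) = ⟪z, a z⟫_ℂ := by rw [haz, inner_zero_right]
        _ = ∑ i, ⟪z, p i z⟫_ℂ := by
            rw [hsum, ContinuousLinearMap.sum_apply, inner_sum]
        _ = ∑ i, ⟪p i z, p i z⟫_ℂ := by
            refine Finset.sum_congr rfl fun i _ => ?_
            have h2 : p i (p i z) = p i z := by
              calc p i (p i z) = (p i * p i) z := rfl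
                _ = p i z := by rw [(hproj i).2]
            calc ⟪z, p i z⟫_ℂ = ⟪z, p i (p i z)⟫_ℂ := by rw [h2]
              _ = ⟪p i z, p i z⟫_ℂ := (hsymj i z (p i z)).symm
    have h3 : (0 : ℝ) = ∑ i, ‖p i z‖ ^ 2 := by
      have h6 := congrArg (fun z : ℂ => RCLike.re z) h1
      simp only [map_zero, map_sum] at h6
      rw [h6]
      exact Finset.sum_congr rfl fun i _ => inner_self_eq_norm_sq _
    have h4 : ∀ i ∈ Finset.univ, (0:ℝ) ≤ ‖p i z‖ ^ 2 := fun i _ => sq_nonneg _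
    have h5 := (Finset.sum_eq_zero_iff_of_nonneg h4).1 h3.symm i (Finset.mem_univ i)
    have : ‖p i z‖ = 0 := by
      have := sq_eq_zero_iff.mp h5
      exact this
    exact norm_eq_zero.mp this
  rintro _ ⟨y, rfl⟩
  rw [← Submodule.orthogonal_orthogonal (LinearMap.range (a : H →ₗ[ℂ] H))]
  rw [Submodule.mem_orthogonal]
  intro u hu
  show ⟪u, p j y⟫_ℂ = 0
  calc ⟪u, p j y⟫_ℂ = ⟪p j u, y⟫_ℂ := (hsymj j u y).symm
    _ = 0 := by rw [hker u hu j, inner_zero_left]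


lemma norm_eq_one_of_inner_self {x : H} (h : ⟪x, x⟫_ℂ = 1) : ‖x‖ = 1 := by
  have h3 : ‖x‖^2 = 1 := by
    rw [← inner_self_eq_norm_sq (𝕜 := ℂ) x, h]
    simp
  have h4 : (‖x‖ - 1) * (‖x‖ + 1) = 0 := by nlinarith
  rcases mul_eq_zero.1 h4 with h5 | h5
  · linarith
  · have := norm_nonneg x; linarith

lemma sqrt_helper {A B s : ℝ} (hA : 0 ≤ A) (hB : 0 ≤ B) (hs : 0 < s) :
    s * (Real.sqrt (A/s) * Real.sqrt (B/s)) = Real.sqrt (A*B) := by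
  rw [← Real.sqrt_mul (div_nonneg hA hs.le), div_mul_div_comm,
    show A*B/(s*s) = A*B/s^2 by ring, Real.sqrt_div (mul_nonneg hA hB), Real.sqrt_sq hs.le]
  field_simp

lemma mixing {v1 v2 : H} (h1 : ‖v1‖ = 1) (h2 : ‖v2‖ = 1) (h12 : ⟪v1, v2⟫_ℂ = 0)
    {μ1 μ2 : ℝ} (hμ1 : 1 < μ1) (hμ2a : 0 < μ2) (hμ2b : μ2 < 1) :
    ∃ x w : H, ‖x‖ = 1 ∧ ‖w‖ = 1 ∧
      (∃ pc qc : ℂ, w = pc • v1 + qc • v2) ∧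
      (μ1:ℂ) • rk1 v1 + (μ2:ℂ) • rk1 v2
        = rk1 x + ((μ1 + μ2 - 1 : ℝ) : ℂ) • rk1 w := by
  set s : ℝ := μ1 + μ2 - 1 with hs
  have hs0 : 0 < s := by simp only [hs]; linarith
  set t : ℝ := μ1 * (1 - μ2) / (μ1 - μ2) with ht
  have hd0 : 0 < μ1 - μ2 := by linarith
  have ht0 : 0 ≤ t := div_nonneg (by nlinarith) hd0.le
  have ht1 : t ≤ 1 := by rw [div_le_one hd0]; nlinarith
  have htm : t ≤ μ1 := by rw [div_le_iff₀ hd0]; nlinarith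
  have htq : 1 - μ2 ≤ t := by rw [le_div_iff₀ hd0]; nlinarith
  have hkey : t * (1 - t) = (μ1 - t) * (μ2 - 1 + t) := by
    rw [ht]; field_simp; ring
  set c : ℝ := Real.sqrt t with hc
  set d : ℝ := Real.sqrt (1 - t) with hdd
  set p : ℝ := Real.sqrt ((μ1 - t)/s) with hp
  set q : ℝ := -Real.sqrt ((μ2 - 1 + t)/s) with hq
  have hc2 : c^2 = t := Real.sq_sqrt ht0
  have hd2 : d^2 = 1 - t := Real.sq_sqrt (by linarith)
  have hp2 : p^2 = (μ1 - t)/s := Real.sq_sqrt (div_nonneg (by linarith) hs0.le)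
  have hq2 : q^2 = (μ2 - 1 + t)/s := by
    have h0 : (0:ℝ) ≤ (μ2 - 1 + t)/s := div_nonneg (by linarith) hs0.le
    rw [hq, neg_sq]
    exact Real.sq_sqrt h0
  have hA : c^2 + s * p^2 = μ1 := by rw [hc2, hp2]; field_simp; ring
  have hB : d^2 + s * q^2 = μ2 := by rw [hd2, hq2]; field_simp; ring
  have hX : c^2 + d^2 = 1 := by rw [hc2, hd2]; ring
  have hWn : p^2 + q^2 = 1 := by
    rw [hp2, hq2, ← add_div]
    have hss : μ1 - t + (μ2 - 1 + t) = s := by rw [hs]; ring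
    rw [hss, div_self hs0.ne']
  have hC : c * d + s * (p * q) = 0 := by
    have e1 : c * d = Real.sqrt (t * (1 - t)) :=
      (Real.sqrt_mul ht0 _).symm
    have e2 : s * (p * q) = -Real.sqrt ((μ1 - t) * (μ2 - 1 + t)) := by
      rw [hp, hq]
      rw [show Real.sqrt ((μ1-t)/s) * -Real.sqrt ((μ2-1+t)/s)
          = -(Real.sqrt ((μ1-t)/s) * Real.sqrt ((μ2-1+t)/s)) by ring, mul_neg]
      rw [sqrt_helper (by linarith) (by linarith) hs0]
    rw [e1, e2, hkey]
    ring
  -- the vectors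
  set x : H := (c:ℂ) • v1 + (d:ℂ) • v2 with hx
  set w : H := (p:ℂ) • v1 + (q:ℂ) • v2 with hw
  have h21 : ⟪v2, v1⟫_ℂ = 0 := inner_eq_zero_symm.mpr h12
  have h11 : ⟪v1, v1⟫_ℂ = 1 := by
    rw [inner_self_eq_norm_sq_to_K, h1]; norm_num
  have h22 : ⟪v2, v2⟫_ℂ = 1 := by
    rw [inner_self_eq_norm_sq_to_K, h2]; norm_num
  have hxn : ‖x‖ = 1 := by
    apply norm_eq_one_of_inner_self
    rw [hx]
    simp only [inner_add_left, inner_add_right, inner_smul_left, inner_smul_right,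
      h11, h22, h12, h21, Complex.conj_ofReal, mul_zero, mul_one, add_zero, zero_add]
    have : (c:ℂ) * c + (d:ℂ) * d = ((c^2 + d^2 : ℝ) : ℂ) := by push_cast; ring
    rw [this, hX]; norm_num
  have hwn : ‖w‖ = 1 := by
    apply norm_eq_one_of_inner_self
    rw [hw]
    simp only [inner_add_left, inner_add_right, inner_smul_left, inner_smul_right,
      h11, h22, h12, h21, Complex.conj_ofReal, mul_zero, mul_one, add_zero, zero_add]
    have : (p:ℂ) * p + (q:ℂ) * q = ((p^2 + q^2 : ℝ) : ℂ) := by push_cast; ring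
    rw [this, hWn]; norm_num
  refine ⟨x, w, hxn, hwn, ⟨(p:ℂ), (q:ℂ), rfl⟩, ?_⟩
  -- cast identities
  have hAc : (c:ℂ)^2 + (s:ℂ) * (p:ℂ)^2 = (μ1:ℂ) := by exact_mod_cast congrArg (Complex.ofReal) hA
  have hBc : (d:ℂ)^2 + (s:ℂ) * (q:ℂ)^2 = (μ2:ℂ) := by exact_mod_cast congrArg (Complex.ofReal) hB
  have hCc : (c:ℂ) * d + (s:ℂ) * ((p:ℂ) * q) = 0 := by exact_mod_cast congrArg (Complex.ofReal) hC
  ext y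
  simp only [ContinuousLinearMap.add_apply, ContinuousLinearMap.smul_apply, rk1_apply,
    hx, hw, inner_add_left, inner_smul_left, Complex.conj_ofReal, smul_add, smul_smul]
  match_scalars
  · linear_combination (-1 : ℂ) * ⟪v1, y⟫_ℂ * hAc - ⟪v2, y⟫_ℂ * hCc
  · linear_combination (-1 : ℂ) * ⟪v2, y⟫_ℂ * hBc - ⟪v1, y⟫_ℂ * hCc


lemma key_induction : ∀ (m r : ℕ), r ≤ m → ∀ (v : Fin r → H), Orthonormal ℂ v →
    ∀ (μ : Fin r → ℝ), (∀ k, 0 < μ k) → (∑ k, μ k) = (m : ℝ) →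
    ∃ x : Fin m → H, (∀ j, ‖x j‖ = 1) ∧
      ∑ k, (μ k : ℂ) • rk1 (v k) = ∑ j, rk1 (x j) := by
  intro m
  induction m with
  | zero =>
    intro r hr v hv μ hμ hsum
    interval_cases r
    exact ⟨Fin.elim0, fun j => j.elim0, by simp⟩
  | succ m IH =>
    intro r hr v hv μ hμ hsum
    classical
    rcases Nat.eq_zero_or_pos r with rfl | hrpos
    · exfalso
      simp only [Finset.univ_eq_empty, Finset.sum_empty] at hsum
      have : (0:ℝ) < ((m+1 : ℕ) : ℝ) := by exact_mod_cast Nat.succ_pos m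
      rw [← hsum] at this
      exact lt_irrefl _ this
    obtain ⟨r', rfl⟩ : ∃ r', r = r' + 1 := ⟨r - 1, by omega⟩
    suffices hstep : ∃ (r'' : ℕ) (_ : r'' ≤ m) (v' : Fin r'' → H) (μ' : Fin r'' → ℝ) (x₀ : H),
        Orthonormal ℂ v' ∧ (∀ k, 0 < μ' k) ∧ (∑ k, μ' k) = (m:ℝ) ∧ ‖x₀‖ = 1 ∧
        ∑ k, (μ k : ℂ) • rk1 (v k) = rk1 x₀ + ∑ k, (μ' k : ℂ) • rk1 (v' k) by
      obtain ⟨r'', hle, v', μ', x₀, hon', hpos', hsum', hx₀, heq⟩ := hstep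
      obtain ⟨x', hx', heq'⟩ := IH r'' hle v' hon' μ' hpos' hsum'
      refine ⟨Fin.cons x₀ x', ?_, ?_⟩
      · intro j
        refine Fin.cases ?_ ?_ j
        · simpa using hx₀
        · intro i; simpa using hx' i
      · rw [heq, heq']
        simp [Fin.sum_univ_succ]
    have hsum1 : ∑ k, μ k = (m:ℝ) + 1 := by rw [hsum]; push_cast; ring
    by_cases hone : ∃ k, μ k = 1
    · -- Case A : remove an eigenvalue equal to 1
      obtain ⟨k, hk⟩ := hone
      refine ⟨r', by omega, v ∘ k.succAbove, μ ∘ k.succAbove, v k,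
        hv.comp _ Fin.succAbove_right_injective, fun i => hμ _, ?_, hv.1 k, ?_⟩
      · have hsplit := Fin.sum_univ_succAbove μ k
        rw [hsplit, hk] at hsum1
        have : ∑ i : Fin r', μ (k.succAbove i) = (m:ℝ) := by linarith
        simpa [Function.comp] using this
      · rw [Fin.sum_univ_succAbove (fun i => (μ i : ℂ) • rk1 (v i)) k, hk]
        simp [Function.comp]
    · by_cases hbig : ∃ k, 1 < μ k
      · obtain ⟨k1, hk1⟩ := hbig
        by_cases hsmall : ∃ k, μ k < 1
        · -- Case C : mixing
          obtain ⟨k2, hk2⟩ := hsmall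
          have hne : k1 ≠ k2 := by
            intro h; rw [h] at hk1; linarith
          obtain ⟨x, w, hxn, hwn, ⟨pc, qc, hwc⟩, hop⟩ :=
            mixing (hv.1 k1) (hv.1 k2) (hv.2 hne) hk1 (hμ k2) hk2
          set s' : ℝ := μ k1 + μ k2 - 1 with hs'
          have hs'0 : 0 < s' := by simp only [hs']; linarith [hμ k2]
          set F : Fin (r'+1) → (H →L[ℂ] H) := fun i => (μ i : ℂ) • rk1 (v i) with hF
          set μn : Fin (r'+1) → ℝ := Function.update μ k2 s' with hμn
          set vn : Fin (r'+1) → H := Function.update v k2 w with hvn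
          set G : Fin (r'+1) → (H →L[ℂ] H) := fun i => (μn i : ℂ) • rk1 (vn i) with hG
          refine ⟨r', by omega, vn ∘ k1.succAbove, μn ∘ k1.succAbove, x, ?_, ?_, ?_, hxn, ?_⟩
          · -- orthonormality
            have hww : ⟪w, w⟫_ℂ = 1 := by
              have := inner_self_eq_norm_sq_to_K (𝕜 := ℂ) w
              rw [hwn] at this
              simpa using this
            have hwv : ∀ (l : Fin (r'+1)), l ≠ k1 → l ≠ k2 → ⟪w, v l⟫_ℂ = 0 := by
              intro l hl1 hl2
              rw [hwc, inner_add_left, inner_smul_left, inner_smul_left,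
                hv.2 (Ne.symm hl1), hv.2 (Ne.symm hl2)]
              simp
            have hvnk2 : vn k2 = w := by rw [hvn]; simp
            have hvnne : ∀ {l : Fin (r'+1)}, l ≠ k2 → vn l = v l := by
              intro l hl; rw [hvn]; exact Function.update_of_ne hl _ _
            rw [orthonormal_iff_ite]
            intro i j
            have hii : k1.succAbove i ≠ k1 := Fin.succAbove_ne k1 i
            have hjj : k1.succAbove j ≠ k1 := Fin.succAbove_ne k1 j
            have hinj : (k1.succAbove i = k1.succAbove j) ↔ i = j :=
              ⟨fun h => Fin.succAbove_right_injective h, fun h => by rw [h]⟩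
            simp only [Function.comp_apply]
            by_cases hi2 : k1.succAbove i = k2 <;> by_cases hj2 : k1.succAbove j = k2
            · have hij : i = j := Fin.succAbove_right_injective (p := k1) (hi2.trans hj2.symm)
              rw [hi2, hj2, hvnk2, if_pos hij]
              exact hww
            · have hij : i ≠ j := fun h => hj2 (h ▸ hi2)
              rw [hi2, hvnk2, hvnne hj2, if_neg hij]
              exact hwv _ hjj hj2
            · have hij : i ≠ j := fun h => hi2 (h ▸ hj2)
              rw [hj2, hvnk2, hvnne hi2, if_neg hij]
              exact inner_eq_zero_symm.mpr (hwv _ hii hi2)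
            · rw [hvnne hi2, hvnne hj2]
              rcases eq_or_ne i j with h | h
              · subst h
                rw [if_pos rfl]
                have := (orthonormal_iff_ite.1 hv) (k1.succAbove i) (k1.succAbove i)
                simpa using this
              · rw [if_neg h]
                exact hv.2 (fun hh => h (hinj.mp hh))
          · intro i
            show 0 < μn (k1.succAbove i)
            by_cases h : k1.succAbove i = k2
            · have hh : μn (k1.succAbove i) = s' := by
                rw [h, hμn]; exact Function.update_self _ _ _
              rw [hh]; exact hs'0
            · have hh : μn (k1.succAbove i) = μ (k1.succAbove i) := by
                rw [hμn]; exact Function.update_of_ne h _ _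
              rw [hh]; exact hμ _
          · -- sum of new eigenvalues
            have E1 : ∑ i, μn i = s' + ∑ i ∈ Finset.univ \ {k2}, μ i :=
              Finset.sum_update_of_mem (Finset.mem_univ k2) μ s'
            have E2 : ∑ i, μ i = ∑ i ∈ Finset.univ \ {k2}, μ i + μ k2 :=
              (Finset.sum_eq_sum_sdiff_singleton_add (Finset.mem_univ k2) μ)
            have E3 : ∑ i, μn i = μn k1 + ∑ i, μn (k1.succAbove i) :=
              Fin.sum_univ_succAbove μn k1
            have E4 : μn k1 = μ k1 := Function.update_of_ne hne _ _
            have goal' : ∑ i, μn (k1.succAbove i) = (m:ℝ) := by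
              rw [E4] at E3
              rw [E2] at hsum1
              have := E1.symm.trans E3
              simp only [hs'] at this ⊢
              linarith
            simpa [Function.comp] using goal'
          · -- operator identity
            have hGF : G = Function.update F k2 ((s' : ℂ) • rk1 w) := by
              funext i
              by_cases h : i = k2
              · subst h
                simp only [hG, hμn, hvn, Function.update_self, hF]
              · simp only [hG, hμn, hvn, Function.update_of_ne h, hF]
            have E1 : ∑ i, G i = (s':ℂ) • rk1 w + ∑ i ∈ Finset.univ \ {k2}, F i := by
              rw [hGF]
              exact Finset.sum_update_of_mem (Finset.mem_univ k2) F _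
            have E2 : ∑ i, F i = ∑ i ∈ Finset.univ \ {k2}, F i + F k2 :=
              Finset.sum_eq_sum_sdiff_singleton_add (Finset.mem_univ k2) F
            have E3 : ∑ i, G i = G k1 + ∑ i, G (k1.succAbove i) :=
              Fin.sum_univ_succAbove G k1
            have E4 : G k1 = F k1 := by
              simp only [hG, hμn, hvn, Function.update_of_ne hne, hF]
            have E5 : F k1 + F k2 = rk1 x + (s':ℂ) • rk1 w := by
              simp only [hF, hs']
              exact_mod_cast hop
            have hBsum : ∑ i ∈ Finset.univ \ {k2}, F i
                = F k1 + ∑ i, G (k1.succAbove i) - (s':ℂ) • rk1 w := by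
              rw [← E4]
              rw [← E3]
              rw [E1]
              abel
            calc ∑ i, F i = ∑ i ∈ Finset.univ \ {k2}, F i + F k2 := E2
              _ = (F k1 + ∑ i, G (k1.succAbove i) - (s':ℂ) • rk1 w) + F k2 := by rw [hBsum]
              _ = (F k1 + F k2) + ∑ i, G (k1.succAbove i) - (s':ℂ) • rk1 w := by abel
              _ = (rk1 x + (s':ℂ) • rk1 w) + ∑ i, G (k1.succAbove i) - (s':ℂ) • rk1 w := by
                  rw [E5]
              _ = rk1 x + ∑ i, G (k1.succAbove i) := by abel
        · -- Case B : all μ ≥ 1, none equal to 1, so all > 1 and r'+1 ≤ m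
          have hall : ∀ k, 1 < μ k := by
            intro k
            rcases lt_trichotomy (μ k) 1 with h | h | h
            · exact absurd ⟨k, h⟩ hsmall
            · exact absurd ⟨k, h⟩ hone
            · exact h
          have hcard : ((r'+1 : ℕ) : ℝ) < (m:ℝ) + 1 := by
            have h1 : ∑ _k : Fin (r'+1), (1:ℝ) < ∑ k, μ k :=
              Finset.sum_lt_sum (fun i _ => (hall i).le) ⟨k1, Finset.mem_univ k1, hall k1⟩
            simpa [hsum1] using h1
          have hrm : r' + 1 ≤ m := by
            have : (r'+1 : ℕ) < m + 1 := by exact_mod_cast hcard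
            omega
          refine ⟨r'+1, hrm, v, Function.update μ k1 (μ k1 - 1), v k1, hv, ?_, ?_, hv.1 k1, ?_⟩
          · intro i
            by_cases h : i = k1
            · subst h; rw [Function.update_self]; linarith [hk1]
            · rw [Function.update_of_ne h]; exact hμ i
          · have E1 : ∑ i, Function.update μ k1 (μ k1 - 1) i
                = (μ k1 - 1) + ∑ i ∈ Finset.univ \ {k1}, μ i :=
              Finset.sum_update_of_mem (Finset.mem_univ k1) μ _
            have E2 : ∑ i, μ i = ∑ i ∈ Finset.univ \ {k1}, μ i + μ k1 :=
              Finset.sum_eq_sum_sdiff_singleton_add (Finset.mem_univ k1) μ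
            rw [E1]
            rw [E2] at hsum1
            linarith
          · set F : Fin (r'+1) → (H →L[ℂ] H) := fun i => (μ i : ℂ) • rk1 (v i) with hF
            set G : Fin (r'+1) → (H →L[ℂ] H) :=
              fun i => ((Function.update μ k1 (μ k1 - 1) i : ℝ) : ℂ) • rk1 (v i) with hG
            have hGF : G = Function.update F k1 (((μ k1 - 1 : ℝ):ℂ) • rk1 (v k1)) := by
              funext i
              by_cases h : i = k1
              · subst h; simp only [hG, Function.update_self, hF]
              · simp only [hG, Function.update_of_ne h, hF]
            have E1 : ∑ i, G i = ((μ k1 - 1 : ℝ):ℂ) • rk1 (v k1)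
                + ∑ i ∈ Finset.univ \ {k1}, F i := by
              rw [hGF]; exact Finset.sum_update_of_mem (Finset.mem_univ k1) F _
            have E2 : ∑ i, F i = ∑ i ∈ Finset.univ \ {k1}, F i + F k1 :=
              Finset.sum_eq_sum_sdiff_singleton_add (Finset.mem_univ k1) F
            have hsm : ((μ k1 - 1 : ℝ):ℂ) • rk1 (v k1) + rk1 (v k1) = F k1 := by
              simp only [hF]
              rw [show ((μ k1 - 1 : ℝ):ℂ) = (μ k1 : ℂ) - 1 by push_cast; ring]
              rw [sub_smul, one_smul]
              abel
            calc ∑ i, F i = ∑ i ∈ Finset.univ \ {k1}, F i + F k1 := E2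
              _ = rk1 (v k1) + ∑ i, G i := by rw [E1, ← hsm]; abel
      · -- contradiction : all μ < 1
        exfalso
        have hall : ∀ k, μ k < 1 := by
          intro k
          rcases lt_trichotomy (μ k) 1 with h | h | h
          · exact h
          · exact absurd ⟨k, h⟩ hone
          · exact absurd ⟨k, h⟩ hbig
        have h1 : ∑ k, μ k < ∑ _k : Fin (r'+1), (1:ℝ) :=
          Finset.sum_lt_sum (fun i _ => (hall i).le) ⟨⟨0, by omega⟩, Finset.mem_univ _, hall _⟩
        rw [hsum1] at h1
        simp only [Finset.sum_const, Finset.card_univ, Fintype.card_fin, nsmul_eq_mul,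
          mul_one] at h1
        have h2 : ((r'+1:ℕ):ℝ) ≤ ((m+1:ℕ):ℝ) := Nat.cast_le.mpr hr
        push_cast at h2 h1
        linarith


/-- **Fillmore's theorem.** A positive finite-rank operator is a finite sum of projections
iff its trace is at least its rank and the trace is a (nonnegative) integer. -/
theorem stmt0 {ι : Type*} (b : HilbertBasis ι ℂ H) (a : H →L[ℂ] H)
    (ha : a.IsPositive) (hfin : FiniteDimensional ℂ (LinearMap.range (a : H →ₗ[ℂ] H))) :
    (∃ (n : ℕ) (p : Fin n → H →L[ℂ] H), (∀ j, IsProjOp (p j)) ∧ a = ∑ j, p j) ↔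
      (Module.finrank ℂ (LinearMap.range (a : H →ₗ[ℂ] H)) : ℝ) ≤ traceAlong b a ∧
        ∃ m : ℕ, traceAlong b a = m := by
  classical
  constructor
  · rintro ⟨n, p, hproj, hsum⟩
    haveI := hfin
    have hle : ∀ j, LinearMap.range (p j : H →ₗ[ℂ] H) ≤ LinearMap.range (a : H →ₗ[ℂ] H) :=
      range_summand_le a ha hfin p hproj hsum
    haveI : ∀ j, FiniteDimensional ℂ (LinearMap.range (p j : H →ₗ[ℂ] H)) := fun j =>
      Submodule.finiteDimensional_of_le (hle j)
    choose d w hw hdecomp using fun j => proj_decomp (p j) (hproj j) (by infer_instance)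
    set κ := (j : Fin n) × Fin (d j) with hκ
    set W : κ → H := fun σ => w σ.1 σ.2 with hWdef
    have ha2 : a = ∑ σ : κ, ((1:ℝ):ℂ) • rk1 (W σ) := by
      have h1 : a = ∑ σ : κ, rk1 (W σ) := by
        rw [hsum]
        rw [show (∑ j, p j) = ∑ j, ∑ k, rk1 (w j k) from
          Finset.sum_congr rfl fun j _ => hdecomp j]
        rw [← Finset.univ_sigma_univ, Finset.sum_sigma]
      rw [h1]
      refine Finset.sum_congr rfl fun σ _ => ?_
      norm_num
    have htr : traceAlong b a = ∑ _σ : κ, (1:ℝ) := by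
      rw [ha2]
      exact traceAlong_sum_rk1 b (fun _ => 1) W (fun σ => hw σ.1 σ.2)
    have htr2 : traceAlong b a = (Fintype.card κ : ℝ) := by
      rw [htr]; simp
    have hrk : Module.finrank ℂ (LinearMap.range (a : H →ₗ[ℂ] H)) ≤ Fintype.card κ := by
      rw [ha2]
      exact finrank_range_sum_rk1_le _ W
    refine ⟨?_, Fintype.card κ, htr2⟩
    rw [htr2]
    exact_mod_cast hrk
  · rintro ⟨hge, m, hm⟩
    obtain ⟨v, μ, hon, hpos, hspec⟩ := exists_spectral a ha hfin
    have htr : traceAlong b a = ∑ k, μ k := by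
      conv_lhs => rw [hspec]
      exact traceAlong_sum_rk1 b μ v hon.1
    have hmsum : ∑ k, μ k = (m : ℝ) := by rw [← htr, hm]
    have hrm : Module.finrank ℂ (LinearMap.range (a : H →ₗ[ℂ] H)) ≤ m := by
      have : (Module.finrank ℂ (LinearMap.range (a : H →ₗ[ℂ] H)) : ℝ) ≤ (m : ℝ) := by
        rw [← hm]; exact hge
      exact_mod_cast this
    obtain ⟨x, hx, heq⟩ := key_induction m _ hrm v hon μ hpos hmsum
    refine ⟨m, fun j => rk1 (x j), fun j => rk1_isProjOp (hx j), ?_⟩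
    conv_lhs => rw [hspec]
    exact heq
end

section
/- Let 𝒜 be an infinite-dimensional abelian von Neumann algebra. Then there exists a positive invertible element a ∈ 𝒜 with I ≤ a ≤ 2I that is not a finite linear combination of projections in 𝒜. -/
open scoped InnerProductSpace
open ContinuousLinearMap

variable {H : Type*} [NormedAddCommGroup H] [InnerProductSpace ℂ H] [CompleteSpace H]

noncomputable section Stmt1Aux

open Polynomial in
/-- If a nonzero polynomial annihilates `a`, then the spectrum of `a` is finite. -/
private lemma spectrum_finite_of_aeval_eq_zero {A : Type*} [Ring A] [Algebra ℂ A]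
    {a : A} {q : ℂ[X]} (hq : q ≠ 0) (h : Polynomial.aeval a q = 0) :
    (spectrum ℂ a).Finite := by
  refine (Polynomial.finite_setOf_isRoot hq).subset fun μ hμ => ?_
  have h1 : q.eval μ ∈ spectrum ℂ (Polynomial.aeval a q) :=
    spectrum.subset_polynomial_aeval a q ⟨μ, hμ, rfl⟩
  rw [h] at h1
  by_contra hroot
  have : IsUnit (algebraMap ℂ A (q.eval μ) - 0) := by
    rw [sub_zero]
    exact (isUnit_iff_ne_zero.mpr hroot).map (algebraMap ℂ A)
  exact spectrum.mem_iff.mp h1 this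

variable {H : Type*} [NormedAddCommGroup H] [InnerProductSpace ℂ H] [CompleteSpace H]

private lemma vN_isClosed (𝒜 : VonNeumannAlgebra H) : IsClosed ((𝒜 : Set (H →L[ℂ] H))) := by
  have hcl : ∀ S : Set (H →L[ℂ] H), IsClosed (Set.centralizer S) := by
    intro S
    have : Set.centralizer S = ⋂ m ∈ S, {c | m * c = c * m} := by
      ext x; simp [Set.mem_centralizer_iff]
    rw [this]
    exact isClosed_biInter fun m _ => isClosed_eq (continuous_mul_left m) (continuous_mul_right m)
  rw [← 𝒜.centralizer_centralizer]
  exact hcl _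

private lemma cfc_mem_vN (𝒜 : VonNeumannAlgebra H) {a : H →L[ℂ] H} (ha : a ∈ 𝒜)
    (hsa : IsSelfAdjoint a) (f : ℝ → ℝ) : cfc f a ∈ 𝒜 := by
  have hmem : ∀ g : ℂ → ℂ, cfc g a ∈ StarAlgebra.elemental ℂ a := by
    intro g
    refine cfc_cases (· ∈ StarAlgebra.elemental ℂ a) a g (zero_mem _) fun hg hna => ?_
    rw [cfcHom_eq_of_isStarNormal]
    exact Subtype.coe_prop _
  have hle : StarAlgebra.elemental ℂ a ≤ 𝒜.toStarSubalgebra :=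
    StarAlgebra.elemental.le_of_mem (vN_isClosed 𝒜) ha
  rw [cfc_real_eq_complex f hsa]
  exact hle (hmem _)

/-- A finite linear combination of commuting projections has finite spectrum. -/
private lemma spectrum_finite_of_combo (𝒜 : VonNeumannAlgebra H)
    (habel : ∀ x ∈ 𝒜, ∀ y ∈ 𝒜, x * y = y * x)
    {n : ℕ} (lam : Fin n → ℂ) (p : Fin n → H →L[ℂ] H)
    (hp : ∀ j, p j ∈ 𝒜 ∧ IsProjOp (p j)) :
    (spectrum ℂ (∑ j, lam j • p j)).Finite := by
  classical
  set a : H →L[ℂ] H := ∑ j, lam j • p j with ha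
  have hcomm : ∀ s : Finset (Fin n), (↑s : Set (Fin n)).Pairwise (Function.onFun Commute p) :=
    fun s i _ j _ _ => habel _ (hp i).1 _ (hp j).1
  set P : Finset (Fin n) → (H →L[ℂ] H) := fun s => s.noncommProd p (hcomm s) with hP
  have key : ∀ (j : Fin n) (s : Finset (Fin n)), p j * P s = P (insert j s) := by
    intro j s
    by_cases hj : j ∈ s
    · have h1 : p j * P (s.erase j) = P s := Finset.mul_noncommProd_erase s hj p (hcomm s)
      rw [Finset.insert_eq_self.mpr hj, ← h1, ← mul_assoc, (hp j).2.2]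
    · exact (Finset.noncommProd_insert_of_notMem s j p (hcomm _) hj).symm
  set M : Submodule ℂ (H →L[ℂ] H) := Submodule.span ℂ (Set.range P) with hM
  haveI : FiniteDimensional ℂ M := FiniteDimensional.span_of_finite ℂ (Set.finite_range P)
  have hmul : ∀ x ∈ M, a * x ∈ M := by
    intro x hx
    induction hx using Submodule.span_induction with
    | mem x hx =>
      obtain ⟨s, rfl⟩ := hx
      have : a * P s = ∑ j, lam j • P (insert j s) := by
        rw [ha, Finset.sum_mul]
        exact Finset.sum_congr rfl fun j _ => by rw [smul_mul_assoc, key]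
      rw [this]
      exact Submodule.sum_mem _ fun j _ =>
        Submodule.smul_mem _ _ (Submodule.subset_span ⟨_, rfl⟩)
    | zero => simpa using Submodule.zero_mem M
    | add x y _ _ hx hy => rw [mul_add]; exact Submodule.add_mem _ hx hy
    | smul c x _ hx => rw [mul_smul_comm]; exact Submodule.smul_mem _ _ hx
  have hpow : ∀ k : ℕ, a ^ k ∈ M := by
    intro k
    induction k with
    | zero =>
      rw [pow_zero]
      have : P ∅ = 1 := Finset.noncommProd_empty p (hcomm ∅)
      exact Submodule.subset_span ⟨∅, this⟩
    | succ k ih => rw [pow_succ']; exact hmul _ ih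
  set d : ℕ := Module.finrank ℂ M with hd
  have hnli : ¬ LinearIndependent ℂ (fun k : Fin (d + 1) => (⟨a ^ (k : ℕ), hpow _⟩ : M)) := by
    intro hli
    have := hli.fintype_card_le_finrank
    simp only [Fintype.card_fin, ← hd] at this
    omega
  obtain ⟨g, hg, j, hj⟩ := Fintype.not_linearIndependent_iff.mp hnli
  have hrel : ∑ k : Fin (d + 1), g k • a ^ (k : ℕ) = 0 := by
    have := congrArg (Subtype.val) hg
    simpa using this
  set q : Polynomial ℂ := ∑ k : Fin (d + 1), Polynomial.C (g k) * Polynomial.X ^ (k : ℕ) with hq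
  have hq0 : q ≠ 0 := by
    intro h0
    apply hj
    have : q.coeff (j : ℕ) = 0 := by rw [h0]; simp
    rw [hq, Polynomial.finset_sum_coeff] at this
    simp only [Polynomial.coeff_C_mul, Polynomial.coeff_X_pow] at this
    rwa [Finset.sum_eq_single j (fun k _ hk => by
        simp [Fin.val_eq_val, Ne.symm hk]) (by simp), if_pos rfl, mul_one] at this
  have haev : Polynomial.aeval a q = 0 := by
    rw [hq, map_sum]
    simpa [Algebra.smul_def] using hrel
  exact spectrum_finite_of_aeval_eq_zero hq0 haev

private lemma isUnit_of_one_le {a : H →L[ℂ] H} (h1 : (1 : H →L[ℂ] H) ≤ a) : IsUnit a := by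
  refine ContinuousLinearMap.isUnit_of_forall_le_norm_inner_map a (c := 1) one_pos fun x => ?_
  have hpos : (a - 1).IsPositive := h1
  have h2 := hpos.re_inner_nonneg_left x
  have h3 : RCLike.re ⟪(a - 1) x, x⟫_ℂ = RCLike.re ⟪a x, x⟫_ℂ - RCLike.re ⟪x, x⟫_ℂ := by
    simp [inner_sub_left]
  have h4 : ‖x‖ ^ 2 ≤ RCLike.re ⟪a x, x⟫_ℂ := by
    have := inner_self_eq_norm_sq (𝕜 := ℂ) x
    linarith [h2, h3.symm ▸ h2]
  calc ‖x‖ ^ 2 * (1 : NNReal) = ‖x‖ ^ 2 := by simp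
    _ ≤ RCLike.re ⟪a x, x⟫_ℂ := h4
    _ ≤ ‖⟪a x, x⟫_ℂ‖ := RCLike.re_le_norm _

/-- The crucial construction: any self-adjoint element of `𝒜` with infinite (real) spectrum
gives rise to a witness for the main theorem. -/
private lemma goal_of_infinite_spectrum (𝒜 : VonNeumannAlgebra H)
    (habel : ∀ x ∈ 𝒜, ∀ y ∈ 𝒜, x * y = y * x)
    {b : H →L[ℂ] H} (hb : b ∈ 𝒜) (hsb : IsSelfAdjoint b)
    (hspec : (spectrum ℝ b).Infinite) :
    ∃ a ∈ 𝒜, (1 : H →L[ℂ] H) ≤ a ∧ a ≤ 2 ∧ IsUnit a ∧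
      ¬ ∃ (n : ℕ) (lam : Fin n → ℂ) (p : Fin n → H →L[ℂ] H),
          (∀ j, p j ∈ 𝒜 ∧ IsProjOp (p j)) ∧ a = ∑ j, lam j • p j := by
  have hπ : (0:ℝ) < Real.pi := Real.pi_pos
  set f : ℝ → ℝ := fun t => 3 / 2 + Real.arctan t / Real.pi with hf
  have hf_cont : Continuous f := by
    exact continuous_const.add (Real.continuous_arctan.div_const _)
  have hf_inj : Function.Injective f := by
    intro s t hst
    have : Real.arctan s = Real.arctan t := by
      have h' : Real.arctan s / Real.pi = Real.arctan t / Real.pi := by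
        simp only [hf] at hst; linarith
      exact (div_left_inj' hπ.ne').mp h'
    exact Real.arctan_injective this
  have hf_lb : ∀ t, 1 ≤ f t := by
    intro t
    have h1 : -(Real.pi / 2) < Real.arctan t := Real.neg_pi_div_two_lt_arctan t
    have h2 : -(1/2 : ℝ) < Real.arctan t / Real.pi :=
      (lt_div_iff₀ hπ).mpr (by nlinarith)
    simp only [hf]
    linarith
  have hf_ub : ∀ t, f t ≤ 2 := by
    intro t
    have h1 : Real.arctan t < Real.pi / 2 := Real.arctan_lt_pi_div_two t
    have h2 : Real.arctan t / Real.pi < 1/2 :=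
      (div_lt_iff₀ hπ).mpr (by nlinarith)
    simp only [hf]
    linarith
  set a : H →L[ℂ] H := cfc f b with ha
  have hsa : IsSelfAdjoint a := cfc_predicate f b
  have hmem : a ∈ 𝒜 := cfc_mem_vN 𝒜 hb hsb f
  have h1a : (1 : H →L[ℂ] H) ≤ a := by
    have : cfc (fun _ : ℝ => (1:ℝ)) b ≤ cfc f b :=
      cfc_mono (fun x _ => hf_lb x) (hf := by fun_prop) (hg := hf_cont.continuousOn)
    rwa [cfc_const_one ℝ b] at this
  have ha2 : a ≤ 2 := by
    have : cfc f b ≤ cfc (fun _ : ℝ => (2:ℝ)) b :=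
      cfc_mono (fun x _ => hf_ub x) (hf := hf_cont.continuousOn) (hg := by fun_prop)
    have h22 : (algebraMap ℝ (H →L[ℂ] H)) 2 = 2 := map_ofNat _ 2
    rw [cfc_const (2:ℝ) b, h22] at this
    exact this
  have hspec_a : (spectrum ℂ a).Infinite := by
    have h1 : spectrum ℝ a = f '' spectrum ℝ b :=
      cfc_map_spectrum f b (ha := hsb) (hf := hf_cont.continuousOn)
    have h2 : (spectrum ℝ a).Infinite := by
      rw [h1]; exact hspec.image (hf_inj.injOn)
    have h3 : (algebraMap ℝ ℂ) '' spectrum ℝ a = spectrum ℂ a :=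
      hsa.spectrumRestricts.algebraMap_image
    rw [← h3]
    exact h2.image ((algebraMap ℝ ℂ).injective.injOn)
  refine ⟨a, hmem, h1a, ha2, isUnit_of_one_le h1a, ?_⟩
  rintro ⟨n, lam, p, hp, heq⟩
  rw [heq] at hspec_a
  exact hspec_a (spectrum_finite_of_combo 𝒜 habel lam p hp)
private lemma exists_eigen_mem_spectrum {T : H →L[ℂ] H} {μ : ℝ} {x : H} (hx : x ≠ 0)
    (hTx : T x = μ • x) : μ ∈ spectrum ℝ T := by
  rw [spectrum.mem_iff]
  intro hu
  obtain ⟨u, hu⟩ := hu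
  apply hx
  have hker : (algebraMap ℝ (H →L[ℂ] H) μ - T) x = 0 := by
    rw [ContinuousLinearMap.sub_apply, hTx, Algebra.algebraMap_eq_smul_one,
      ContinuousLinearMap.smul_apply, ContinuousLinearMap.one_apply, sub_self]
  calc x = ((↑u⁻¹ * ↑u : H →L[ℂ] H)) x := by rw [u.inv_mul]; rfl
    _ = (↑u⁻¹ : H →L[ℂ] H) ((↑u : H →L[ℂ] H) x) := rfl
    _ = 0 := by rw [hu, hker, map_zero]

private lemma exists_infinite_spectrum_of_orth (𝒜 : VonNeumannAlgebra H)
    (e : ℕ → H →L[ℂ] H) (he𝒜 : ∀ n, e n ∈ 𝒜) (hproj : ∀ n, IsProjOp (e n))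
    (hne : ∀ n, e n ≠ 0) (horth : ∀ m n, m ≠ n → e m * e n = 0) :
    ∃ b ∈ 𝒜, IsSelfAdjoint b ∧ (spectrum ℝ b).Infinite := by
  have hnorm : ∀ n, ‖e n‖ ≤ 1 := by
    intro n
    have h1 : ‖e n‖ * ‖e n‖ = ‖e n‖ := by
      rw [← CStarRing.norm_star_mul_self, (hproj n).1.star_eq, (hproj n).2]
    nlinarith [norm_nonneg (e n)]
  set c : ℕ → ℝ := fun n => (1/2 : ℝ)^(n+1) with hc
  have hc_pos : ∀ n, 0 < c n := fun n => by positivity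
  have hsum : Summable (fun n => c n • e n) := by
    apply Summable.of_norm
    have hle : ∀ n, ‖c n • e n‖ ≤ (1/2:ℝ)^(n+1) := by
      intro n
      rw [norm_smul]
      calc ‖c n‖ * ‖e n‖ ≤ ‖c n‖ * 1 := by
            exact mul_le_mul_of_nonneg_left (hnorm n) (norm_nonneg _)
        _ = (1/2:ℝ)^(n+1) := by
            rw [mul_one, Real.norm_eq_abs, abs_of_pos (hc_pos n)]
    refine Summable.of_nonneg_of_le (fun n => norm_nonneg _) hle ?_
    simpa [pow_succ'] using
      ((summable_geometric_of_lt_one (by norm_num) (by norm_num) :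
        Summable fun n : ℕ => (1/2:ℝ)^n).mul_left (1/2:ℝ))
  set T : H →L[ℂ] H := ∑' n, c n • e n with hT
  have hT𝒜 : T ∈ 𝒜 := by
    refine (vN_isClosed 𝒜).mem_of_tendsto hsum.hasSum (Filter.Eventually.of_forall fun s => ?_)
    refine sum_mem fun i _ => ?_
    show (c i) • e i ∈ 𝒜
    rw [← algebraMap_smul ℂ (c i) (e i)]
    exact 𝒜.toStarSubalgebra.toSubalgebra.smul_mem (he𝒜 i) _
  have hTsa : IsSelfAdjoint T := by
    rw [IsSelfAdjoint, hT, tsum_star]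
    refine tsum_congr fun n => ?_
    rw [star_smul, (hproj n).1.star_eq, star_trivial]
  have hmem : ∀ n, c n ∈ spectrum ℝ T := by
    intro n
    have hxne : ∃ y, e n y ≠ 0 := by
      by_contra h
      push_neg at h
      exact hne n (ContinuousLinearMap.ext fun y => by simp [h y])
    obtain ⟨y, hy⟩ := hxne
    have hex : e n (e n y) = e n y := by
      rw [← ContinuousLinearMap.mul_apply, (hproj n).2]
    have hem : ∀ m, m ≠ n → e m (e n y) = 0 := by
      intro m hm
      rw [← ContinuousLinearMap.mul_apply, horth m n hm, ContinuousLinearMap.zero_apply]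
    have hTx : T (e n y) = c n • e n y := by
      have h1 : T (e n y) = ∑' m, (c m • e m) (e n y) :=
        (ContinuousLinearMap.apply ℂ H (e n y)).map_tsum hsum
      rw [h1, tsum_eq_single n (fun m hm => by
        rw [ContinuousLinearMap.smul_apply, hem m hm, smul_zero])]
      rw [ContinuousLinearMap.smul_apply, hex]
    exact exists_eigen_mem_spectrum hy hTx
  have hinj : Function.Injective c := by
    have hsa : StrictAnti c := fun i j hij =>
      pow_lt_pow_right_of_lt_one₀ (by norm_num) (by norm_num) (by omega)
    exact hsa.injective
  exact ⟨T, hT𝒜, hTsa, Set.infinite_of_injective_forall_mem hinj hmem⟩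

/-- The projections in `𝒜`. -/
private def PrSet (𝒜 : VonNeumannAlgebra H) : Set (H →L[ℂ] H) := {x | x ∈ 𝒜 ∧ IsProjOp x}

private lemma mul_mem_Pr (𝒜 : VonNeumannAlgebra H)
    (habel : ∀ x ∈ 𝒜, ∀ y ∈ 𝒜, x * y = y * x)
    {x y : H →L[ℂ] H} (hx : x ∈ PrSet 𝒜) (hy : y ∈ PrSet 𝒜) : x * y ∈ PrSet 𝒜 := by
  have hcm : x * y = y * x := habel x hx.1 y hy.1
  refine ⟨mul_mem hx.1 hy.1, ?_, ?_⟩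
  · rw [IsSelfAdjoint, star_mul, hx.2.1.star_eq, hy.2.1.star_eq, ← hcm]
  · have hcomm : Commute y x := hcm.symm
    rw [hcomm.mul_mul_mul_comm, hx.2.2, hy.2.2]

private lemma step_lemma (𝒜 : VonNeumannAlgebra H)
    (habel : ∀ x ∈ 𝒜, ∀ y ∈ 𝒜, x * y = y * x)
    {q : H →L[ℂ] H} (hq : q ∈ PrSet 𝒜)
    (hinf : {x ∈ PrSet 𝒜 | x * q = x}.Infinite) :
    ∃ q' e, q' ∈ PrSet 𝒜 ∧ {x ∈ PrSet 𝒜 | x * q' = x}.Infinite ∧ q' * q = q' ∧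
      e ∈ PrSet 𝒜 ∧ e ≠ 0 ∧ e * q = e ∧ e * q' = 0 := by
  classical
  obtain ⟨p, hpB, hp0q⟩ : ∃ p, p ∈ {x ∈ PrSet 𝒜 | x * q = x} ∧ p ∉ ({0, q} : Set _) := by
    obtain ⟨p, hp⟩ := (hinf.diff (Set.toFinite ({0, q} : Set _))).nonempty
    exact ⟨p, hp.1, hp.2⟩
  simp only [Set.mem_insert_iff, Set.mem_singleton_iff, not_or] at hp0q
  obtain ⟨hp0, hpne⟩ := hp0q
  obtain ⟨hpPr, hpq⟩ := hpB
  have hqp : q * p = p := by rw [← habel p hpPr.1 q hq.1, hpq]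
  set r := q - p with hr
  have hrPr : r ∈ PrSet 𝒜 := by
    refine ⟨sub_mem hq.1 hpPr.1, hq.2.1.sub hpPr.2.1, ?_⟩
    have hexp : (q - p) * (q - p) = q * q - q * p - p * q + p * p := by noncomm_ring
    rw [hr, hexp, hq.2.2, hqp, hpq, hpPr.2.2]
    abel
  have hr0 : r ≠ 0 := sub_ne_zero.mpr (Ne.symm hpne)
  have hpr : p * r = 0 := by rw [hr, mul_sub, hpq, hpPr.2.2, sub_self]
  have hrp : r * p = 0 := by rw [hr, sub_mul, hqp, hpPr.2.2, sub_self]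
  have hrq : r * q = r := by rw [hr, sub_mul, hq.2.2, hpq]
  have hsplit : ¬({x ∈ PrSet 𝒜 | x * p = x}.Finite ∧ {x ∈ PrSet 𝒜 | x * r = x}.Finite) := by
    rintro ⟨h1, h2⟩
    apply hinf
    have himg : (fun x => (x * p, x * r)) '' {x ∈ PrSet 𝒜 | x * q = x} ⊆
        {x ∈ PrSet 𝒜 | x * p = x} ×ˢ {x ∈ PrSet 𝒜 | x * r = x} := by
      rintro _ ⟨x, hx, rfl⟩
      refine ⟨⟨mul_mem_Pr 𝒜 habel hx.1 hpPr, by rw [mul_assoc, hpPr.2.2]⟩,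
        ⟨mul_mem_Pr 𝒜 habel hx.1 hrPr, by rw [mul_assoc, hrPr.2.2]⟩⟩
    have hinjOn : Set.InjOn (fun x => (x * p, x * r)) {x ∈ PrSet 𝒜 | x * q = x} := by
      intro x hx y hy hxy
      have h1 : x * p = y * p := congrArg Prod.fst hxy
      have h2 : x * r = y * r := congrArg Prod.snd hxy
      have hx' : x = x * p + x * r := by
        rw [← mul_add, hr, add_sub_cancel, hx.2]
      have hy' : y = y * p + y * r := by
        rw [← mul_add, hr, add_sub_cancel, hy.2]
      rw [hx', hy', h1, h2]
    exact Set.Finite.of_finite_image ((h1.prod h2).subset himg) hinjOn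
  by_cases hcase : {x ∈ PrSet 𝒜 | x * p = x}.Infinite
  · exact ⟨p, r, hpPr, hcase, hpq, hrPr, hr0, hrq, hrp⟩
  · have hcase' : {x ∈ PrSet 𝒜 | x * r = x}.Infinite := by
      by_contra h
      exact hsplit ⟨Set.not_infinite.mp hcase, Set.not_infinite.mp h⟩
    exact ⟨r, p, hrPr, hcase', hrq, hpPr, hp0, hpq, hpr⟩

private lemma exists_orth_family (𝒜 : VonNeumannAlgebra H)
    (habel : ∀ x ∈ 𝒜, ∀ y ∈ 𝒜, x * y = y * x)
    (hPrInf : (PrSet 𝒜).Infinite) :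
    ∃ e : ℕ → H →L[ℂ] H, (∀ n, e n ∈ 𝒜) ∧ (∀ n, IsProjOp (e n)) ∧ (∀ n, e n ≠ 0) ∧
      (∀ m n, m ≠ n → e m * e n = 0) := by
  classical
  have hg0 : ((1:H→L[ℂ]H) ∈ PrSet 𝒜 ∧ {x ∈ PrSet 𝒜 | x * 1 = x}.Infinite) := by
    refine ⟨⟨one_mem 𝒜.toStarSubalgebra, IsSelfAdjoint.one _, one_mul 1⟩, ?_⟩
    have : {x ∈ PrSet 𝒜 | x * 1 = x} = PrSet 𝒜 := by ext x; simp [mul_one]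
    rw [this]; exact hPrInf
  have hnext : ∀ g : {q : H →L[ℂ] H // q ∈ PrSet 𝒜 ∧ {x ∈ PrSet 𝒜 | x * q = x}.Infinite},
      ∃ g' : {q : H →L[ℂ] H // q ∈ PrSet 𝒜 ∧ {x ∈ PrSet 𝒜 | x * q = x}.Infinite},
      ∃ e : H →L[ℂ] H, e ∈ PrSet 𝒜 ∧ e ≠ 0 ∧ e * g.1 = e ∧ e * g'.1 = 0 ∧
        g'.1 * g.1 = g'.1 := by
    intro g
    obtain ⟨q', e, h1, h2, h3, h4, h5, h6, h7⟩ := step_lemma 𝒜 habel g.2.1 g.2.2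
    exact ⟨⟨q', h1, h2⟩, e, h4, h5, h6, h7, h3⟩
  set seq : ℕ → {q : H →L[ℂ] H // q ∈ PrSet 𝒜 ∧ {x ∈ PrSet 𝒜 | x * q = x}.Infinite} :=
    fun n => Nat.rec ⟨1, hg0⟩ (fun _ g => (hnext g).choose) n with hseq
  set e : ℕ → H →L[ℂ] H := fun n => (hnext (seq n)).choose_spec.choose with he_def
  have he : ∀ n, e n ∈ PrSet 𝒜 ∧ e n ≠ 0 ∧ e n * (seq n).1 = e n ∧
      e n * (seq (n+1)).1 = 0 ∧ (seq (n+1)).1 * (seq n).1 = (seq (n+1)).1 := by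
    intro n
    exact (hnext (seq n)).choose_spec.choose_spec
  have hchain : ∀ m n, m ≤ n → (seq n).1 * (seq m).1 = (seq n).1 := by
    intro m n h
    induction n, h using Nat.le_induction with
    | base => exact (seq m).2.1.2.2
    | succ n hmn ih =>
      have h5 := (he n).2.2.2.2
      calc (seq (n+1)).1 * (seq m).1 = ((seq (n+1)).1 * (seq n).1) * (seq m).1 := by rw [h5]
        _ = (seq (n+1)).1 * ((seq n).1 * (seq m).1) := mul_assoc _ _ _
        _ = (seq (n+1)).1 := by rw [ih, h5]
  have horth : ∀ m n, m < n → e m * e n = 0 := by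
    intro m n h
    have h1 : e n * (seq (m+1)).1 = e n := by
      have hn := (he n).2.2.1
      calc e n * (seq (m+1)).1 = (e n * (seq n).1) * (seq (m+1)).1 := by rw [hn]
        _ = e n * ((seq n).1 * (seq (m+1)).1) := mul_assoc _ _ _
        _ = e n := by rw [hchain (m+1) n h, hn]
    have h2 : (seq (m+1)).1 * e n = e n := by
      have hcomm := habel (e n) (he n).1.1 ((seq (m+1)).1) (seq (m+1)).2.1.1
      rw [← hcomm]; exact h1
    calc e m * e n = e m * ((seq (m+1)).1 * e n) := by rw [h2]
      _ = (e m * (seq (m+1)).1) * e n := (mul_assoc _ _ _).symm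
      _ = 0 := by rw [(he m).2.2.2.1, zero_mul]
  refine ⟨e, fun n => (he n).1.1, fun n => (he n).1.2, fun n => (he n).2.1, ?_⟩
  intro m n hmn
  rcases lt_or_gt_of_ne hmn with h | h
  · exact horth m n h
  · rw [habel (e m) (he m).1.1 (e n) (he n).1.1]
    exact horth n m h

private lemma selfadjoint_mem_span (𝒜 : VonNeumannAlgebra H)
    {b : H →L[ℂ] H} (hb : b ∈ 𝒜) (hsb : IsSelfAdjoint b)
    (hfin : (spectrum ℝ b).Finite) :
    b ∈ Submodule.span ℂ (PrSet 𝒜) := by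
  classical
  set s := hfin.toFinset with hs
  set χ : ℝ → ℝ → ℝ := fun t x => if x = t then 1 else 0 with hχ
  have hcont : ∀ g : ℝ → ℝ, ContinuousOn g (spectrum ℝ b) := fun g => hfin.continuousOn g
  have hEmem : ∀ t : ℝ, (cfc (χ t) b) ∈ PrSet 𝒜 := by
    intro t
    refine ⟨cfc_mem_vN 𝒜 hb hsb _, cfc_predicate _ b, ?_⟩
    rw [← cfc_mul _ _ b (hcont _) (hcont _)]
    refine cfc_congr fun x _ => ?_
    by_cases hx : x = t <;> simp [hχ, hx]
  have hrep : b = ∑ t ∈ s, (t : ℝ) • cfc (χ t) b := by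
    have h1 : b = cfc (fun x : ℝ => ∑ t ∈ s, t * χ t x) b := by
      conv_lhs => rw [← cfc_id ℝ b hsb]
      refine cfc_congr fun x hx => ?_
      have hxs : x ∈ s := hfin.mem_toFinset.mpr hx
      have hterm : ∀ t : ℝ, t * χ t x = if t = x then t else 0 := by
        intro t
        by_cases h : t = x
        · subst h; simp [hχ]
        · rw [show χ t x = 0 from if_neg (fun h' => h h'.symm), mul_zero, if_neg h]
      rw [Finset.sum_congr rfl (fun t _ => hterm t), Finset.sum_ite_eq' s x (fun t => t),
        if_pos hxs]
      rfl
    calc b = cfc (fun x : ℝ => ∑ t ∈ s, t * χ t x) b := h1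
      _ = cfc (∑ t ∈ s, fun x => t * χ t x) b := by
          congr 1
          funext x
          simp [Finset.sum_apply]
      _ = ∑ t ∈ s, cfc (fun x => t * χ t x) b :=
          cfc_sum (fun t x => t * χ t x) b s (fun t _ => hcont _)
      _ = ∑ t ∈ s, (t : ℝ) • cfc (χ t) b :=
          Finset.sum_congr rfl fun t _ => cfc_const_mul t (χ t) b (hcont _)
  rw [hrep]
  refine Submodule.sum_mem _ fun t _ => ?_
  rw [← algebraMap_smul ℂ (t : ℝ) (cfc (χ t) b)]
  exact Submodule.smul_mem _ _ (Submodule.subset_span (hEmem t))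

private lemma mem_span_proj (𝒜 : VonNeumannAlgebra H)
    (hallfin : ∀ b ∈ 𝒜, IsSelfAdjoint b → (spectrum ℝ b).Finite)
    {x : H →L[ℂ] H} (hx : x ∈ 𝒜) :
    x ∈ Submodule.span ℂ (PrSet 𝒜) := by
  set c := (2⁻¹ : ℂ) • (x + star x) with hcdef
  set d := (2 * Complex.I)⁻¹ • (x - star x) with hddef
  have hxstar : star x ∈ 𝒜 := star_mem hx
  have hadd : x + star x ∈ 𝒜 := add_mem hx hxstar
  have hsub : x - star x ∈ 𝒜 := sub_mem hx hxstar
  have hc𝒜 : c ∈ 𝒜 := 𝒜.toStarSubalgebra.toSubalgebra.smul_mem hadd _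
  have hd𝒜 : d ∈ 𝒜 := 𝒜.toStarSubalgebra.toSubalgebra.smul_mem hsub _
  have hcsa : IsSelfAdjoint c := by
    rw [IsSelfAdjoint, hcdef, star_smul, star_add, star_star]
    have h1 : star (2⁻¹ : ℂ) = 2⁻¹ := by
      rw [Complex.star_def, map_inv₀, map_ofNat]
    rw [h1, add_comm]
  have hdsa : IsSelfAdjoint d := by
    rw [IsSelfAdjoint, hddef, star_smul, star_sub, star_star]
    have h1 : star ((2 * Complex.I)⁻¹ : ℂ) = -(2 * Complex.I)⁻¹ := by
      rw [Complex.star_def, map_inv₀, map_mul, Complex.conj_I, map_ofNat, mul_neg, inv_neg]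
    rw [h1]
    rw [neg_smul, ← smul_neg, neg_sub]
  have hxcd : x = c + Complex.I • d := by
    rw [hcdef, hddef, smul_smul]
    have h2 : Complex.I * (2 * Complex.I)⁻¹ = 2⁻¹ := by
      rw [mul_inv, ← mul_assoc, mul_comm Complex.I, mul_assoc, mul_inv_cancel₀ Complex.I_ne_zero,
        mul_one]
    rw [h2, ← smul_add]
    have h3 : (x + star x) + (x - star x) = (2 : ℂ) • x := by
      rw [two_smul]; abel
    rw [h3, smul_smul]
    norm_num
  rw [hxcd]
  exact Submodule.add_mem _
    (selfadjoint_mem_span 𝒜 hc𝒜 hcsa (hallfin c hc𝒜 hcsa))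
    (Submodule.smul_mem _ _ (selfadjoint_mem_span 𝒜 hd𝒜 hdsa (hallfin d hd𝒜 hdsa)))

end Stmt1Aux
/-- In an infinite-dimensional abelian von Neumann algebra there is a positive invertible
element with `I ≤ a ≤ 2I` that is not a finite linear combination of projections. -/
theorem stmt1 (𝒜 : VonNeumannAlgebra H)
    (habel : ∀ x ∈ 𝒜, ∀ y ∈ 𝒜, x * y = y * x)
    (hinf : ¬ FiniteDimensional ℂ
      (Subalgebra.toSubmodule 𝒜.toStarSubalgebra.toSubalgebra)) :
    ∃ a ∈ 𝒜, (1 : H →L[ℂ] H) ≤ a ∧ a ≤ 2 ∧ IsUnit a ∧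
      ¬ ∃ (n : ℕ) (lam : Fin n → ℂ) (p : Fin n → H →L[ℂ] H),
          (∀ j, p j ∈ 𝒜 ∧ IsProjOp (p j)) ∧ a = ∑ j, lam j • p j := by
  by_cases hcase : ∃ b ∈ 𝒜, IsSelfAdjoint b ∧ (spectrum ℝ b).Infinite
  · obtain ⟨b, hb, h1, h2⟩ := hcase
    exact goal_of_infinite_spectrum 𝒜 habel hb h1 h2
  · exfalso
    push_neg at hcase
    have hallfin : ∀ b ∈ 𝒜, IsSelfAdjoint b → (spectrum ℝ b).Finite := fun b hb hsb =>
      hcase b hb hsb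
    have hPrInf : (PrSet 𝒜).Infinite := by
      by_contra hfin
      rw [Set.not_infinite] at hfin
      apply hinf
      have hle : Subalgebra.toSubmodule 𝒜.toStarSubalgebra.toSubalgebra ≤
          Submodule.span ℂ (PrSet 𝒜) := fun x hx => mem_span_proj 𝒜 hallfin hx
      haveI := FiniteDimensional.span_of_finite ℂ hfin
      exact Submodule.finiteDimensional_of_le hle
    obtain ⟨e, he1, he2, he3, he4⟩ := exists_orth_family 𝒜 habel hPrInf
    obtain ⟨b, hb, hsb, hspec⟩ := exists_infinite_spectrum_of_orth 𝒜 e he1 he2 he3 he4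
    exact hspec (hallfin b hb hsb)
end

section
/- Let {b_j}_{j≥1} be a sequence of positive operators in B(H) such that the range projections satisfy R_{b_i} R_{b_j} = 0 whenever |i−j| > 1, each b_j is a sum of at most N projections, and the series Σ b_j converges strongly to b. Then b is a sum of 2N projections in B(H). -/
open scoped InnerProductSpace
open ContinuousLinearMap

variable {H : Type*} [NormedAddCommGroup H] [InnerProductSpace ℂ H] [CompleteSpace H]

lemma isProjOp_zero : IsProjOp (0 : H →L[ℂ] H) := ⟨by simp [IsSelfAdjoint], by simp⟩

lemma IsProjOp.apply_apply {p : H →L[ℂ] H} (hp : IsProjOp p) (x : H) : p (p x) = p x := by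
  rw [← ContinuousLinearMap.mul_apply, hp.2]

lemma IsProjOp.inner_left_right {p : H →L[ℂ] H} (hp : IsProjOp p) (x y : H) :
    ⟪p x, y⟫_ℂ = ⟪x, p y⟫_ℂ := by
  nth_rewrite 1 [← hp.1.adjoint_eq]
  exact ContinuousLinearMap.adjoint_inner_left p y x

lemma IsProjOp.normSq {p : H →L[ℂ] H} (hp : IsProjOp p) (x : H) :
    ‖p x‖ ^ 2 = RCLike.re ⟪x, p x⟫_ℂ := by
  have h : ⟪p x, p x⟫_ℂ = ⟪x, p x⟫_ℂ := by rw [hp.inner_left_right, hp.apply_apply]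
  rw [← h, inner_self_eq_norm_sq]

lemma IsProjOp.norm_le {p : H →L[ℂ] H} (hp : IsProjOp p) (x : H) : ‖p x‖ ≤ ‖x‖ := by
  have h := hp.normSq x
  have h2 : RCLike.re ⟪x, p x⟫_ℂ ≤ ‖⟪x, p x⟫_ℂ‖ := RCLike.re_le_norm _
  have h3 : ‖⟪x, p x⟫_ℂ‖ ≤ ‖x‖ * ‖p x‖ := norm_inner_le_norm _ _
  nlinarith [norm_nonneg (p x), norm_nonneg x]

lemma isProjOp_sum (e : ℕ → H →L[ℂ] H) (hp : ∀ j, IsProjOp (e j))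
    (hor : ∀ i j, i ≠ j → e i * e j = 0) (s : Finset ℕ) : IsProjOp (∑ j ∈ s, e j) := by
  constructor
  · show star _ = _
    rw [star_sum]
    exact Finset.sum_congr rfl fun j _ => (hp j).1
  · rw [Finset.sum_mul_sum]
    refine Finset.sum_congr rfl fun i hi => ?_
    rw [Finset.sum_eq_single i (fun j _ hne => hor i j (Ne.symm hne)) (fun h => absurd hi h)]
    exact (hp i).2

lemma normSq_sum_apply (e : ℕ → H →L[ℂ] H) (hp : ∀ j, IsProjOp (e j))
    (hor : ∀ i j, i ≠ j → e i * e j = 0) (s : Finset ℕ) (x : H) :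
    ‖(∑ j ∈ s, e j) x‖ ^ 2 = ∑ j ∈ s, ‖e j x‖ ^ 2 := by
  rw [(isProjOp_sum e hp hor s).normSq, ContinuousLinearMap.sum_apply, inner_sum, map_sum]
  exact Finset.sum_congr rfl fun j _ => ((hp j).normSq x).symm

lemma summable_normSq_apply (e : ℕ → H →L[ℂ] H) (hp : ∀ j, IsProjOp (e j))
    (hor : ∀ i j, i ≠ j → e i * e j = 0) (x : H) :
    Summable fun j => ‖e j x‖ ^ 2 := by
  refine summable_of_sum_le (c := ‖x‖ ^ 2) (fun j => sq_nonneg _) (fun u => ?_)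
  rw [← normSq_sum_apply e hp hor u x]
  have h := (isProjOp_sum e hp hor u).norm_le x
  nlinarith [norm_nonneg ((∑ j ∈ u, e j) x)]

lemma summable_proj_apply (e : ℕ → H →L[ℂ] H) (hp : ∀ j, IsProjOp (e j))
    (hor : ∀ i j, i ≠ j → e i * e j = 0) (x : H) :
    Summable fun j => e j x := by
  rw [summable_iff_vanishing_norm]
  intro ε hε
  obtain ⟨s, hs⟩ := summable_iff_vanishing_norm.mp
    (summable_normSq_apply e hp hor x) (ε ^ 2) (by positivity)
  refine ⟨s, fun t ht => ?_⟩
  have h2 : ∑ j ∈ t, ‖e j x‖ ^ 2 < ε ^ 2 :=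
    lt_of_le_of_lt (le_abs_self _) (by simpa using hs t ht)
  have h3 : ‖∑ j ∈ t, e j x‖ ^ 2 < ε ^ 2 := by
    rw [← ContinuousLinearMap.sum_apply, normSq_sum_apply e hp hor t x]
    exact h2
  exact lt_of_pow_lt_pow_left₀ 2 (le_of_lt hε) h3

lemma exists_projOp_hasSum (e : ℕ → H →L[ℂ] H) (hp : ∀ j, IsProjOp (e j))
    (hor : ∀ i j, i ≠ j → e i * e j = 0) :
    ∃ P : H →L[ℂ] H, IsProjOp P ∧ ∀ x, HasSum (fun j => e j x) (P x) := by
  have hsum : ∀ x : H, Summable fun j => e j x := summable_proj_apply e hp hor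
  let L : H →ₗ[ℂ] H :=
    { toFun := fun x => ∑' j, e j x
      map_add' := fun x y => by
        have h := (hsum x).hasSum.add (hsum y).hasSum
        have h2 : HasSum (fun j => e j (x + y)) (∑' j, e j x + ∑' j, e j y) := by
          simpa [map_add] using h
        exact h2.tsum_eq
      map_smul' := fun c x => by
        have h := (hsum x).hasSum.const_smul c
        have h2 : HasSum (fun j => e j (c • x)) (c • ∑' j, e j x) := by
          simpa [map_smul] using h
        exact h2.tsum_eq }
  have hbound : ∀ x, ‖L x‖ ≤ 1 * ‖x‖ := by
    intro x
    rw [one_mul]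
    refine le_of_tendsto ((continuous_norm.tendsto _).comp ((hsum x).hasSum)) ?_
    filter_upwards with s
    show ‖∑ j ∈ s, e j x‖ ≤ ‖x‖
    rw [← ContinuousLinearMap.sum_apply]
    exact (isProjOp_sum e hp hor s).norm_le x
  let P := L.mkContinuous 1 hbound
  have hPx : ∀ x, HasSum (fun j => e j x) (P x) := fun x => (hsum x).hasSum
  have heP : ∀ i x, e i (P x) = e i x := by
    intro i x
    have h1 : HasSum (fun j => e i (e j x)) (e i (P x)) := (hPx x).mapL (e i)
    have h2 : HasSum (fun j => e i (e j x)) (e i x) := by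
      have heq : (fun j => e i (e j x)) = fun j => if j = i then e i x else 0 := by
        funext j
        by_cases hji : j = i
        · subst hji; simp [(hp j).apply_apply x]
        · have h0 := DFunLike.congr_fun (hor i j fun h => hji h.symm) x
          simp only [ContinuousLinearMap.mul_apply, ContinuousLinearMap.zero_apply] at h0
          simp [hji, h0]
      rw [heq]
      exact hasSum_ite_eq i (e i x)
    exact h1.unique h2
  refine ⟨P, ⟨?_, ?_⟩, hPx⟩
  · rw [ContinuousLinearMap.isSelfAdjoint_iff_isSymmetric]
    intro x y
    have h1 : HasSum (fun j => ⟪x, e j y⟫_ℂ) ⟪x, P y⟫_ℂ := (hPx y).mapL (innerSL ℂ x)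
    have h2 : HasSum (fun j => ⟪x, e j y⟫_ℂ) ⟪P x, y⟫_ℂ := by
      have h3 : HasSum (fun j => ⟪y, e j x⟫_ℂ) ⟪y, P x⟫_ℂ := (hPx x).mapL (innerSL ℂ y)
      have h4 := h3.map (starRingEnd ℂ).toAddMonoidHom RCLike.continuous_conj
      simp only [RingHom.toAddMonoidHom_eq_coe, AddMonoidHom.coe_coe, Function.comp_def,
        inner_conj_symm] at h4
      have h5 : (fun j => ⟪e j x, y⟫_ℂ) = fun j => ⟪x, e j y⟫_ℂ := by
        funext j; exact (hp j).inner_left_right x y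
      rwa [h5] at h4
    exact h2.unique h1
  · ext x
    have h1 : HasSum (fun j => e j (P x)) (P (P x)) := hPx (P x)
    have h2 : HasSum (fun j => e j (P x)) (P x) := by
      have heq : (fun j => e j (P x)) = fun j => e j x := funext fun j => heP j x
      rw [heq]; exact hPx x
    simpa [ContinuousLinearMap.mul_apply] using h1.unique h2

lemma rangeProjection_comp (a : H →L[ℂ] H) : rangeProjection a * a = a := by
  ext x
  have hx : a x ∈ (LinearMap.range (a : H →ₗ[ℂ] H)).topologicalClosure :=
    Submodule.le_topologicalClosure _ (LinearMap.mem_range_self (a : H →ₗ[ℂ] H) x)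
  simp only [rangeProjection, ContinuousLinearMap.mul_apply, ContinuousLinearMap.coe_comp',
    Function.comp_apply, Submodule.subtypeL_apply]
  exact Submodule.starProjection_eq_self_iff.mpr hx

lemma rangeProjection_isSelfAdjoint' (a : H →L[ℂ] H) : IsSelfAdjoint (rangeProjection a) := by
  haveI : CompleteSpace ((LinearMap.range (a : H →ₗ[ℂ] H)).topologicalClosure) :=
    (Submodule.isClosed_topologicalClosure _).completeSpace_coe
  exact isSelfAdjoint_starProjection _

lemma comp_rangeProjection (a : H →L[ℂ] H) (ha : IsSelfAdjoint a) :
    a * rangeProjection a = a := by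
  have h := congrArg star (rangeProjection_comp a)
  rwa [star_mul, (rangeProjection_isSelfAdjoint' a).star_eq, ha.star_eq] at h

/-- If positive operators `b j` have range projections orthogonal whenever `|i - j| > 1`,
each `b j` is a sum of at most `N` projections, and `∑ b j` converges strongly to `B`,
then `B` is a sum of `2 * N` projections. -/
theorem stmt3 (N : ℕ) (b : ℕ → H →L[ℂ] H) (B : H →L[ℂ] H)
    (hpos : ∀ j, (b j).IsPositive)
    (horth : ∀ i j : ℕ, 1 < ((i : ℤ) - j).natAbs →
      rangeProjection (b i) * rangeProjection (b j) = 0)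
    (hNj : ∀ j, ∃ m : ℕ, m ≤ N ∧ ∃ p : Fin m → H →L[ℂ] H,
      (∀ k, IsProjOp (p k)) ∧ b j = ∑ k, p k)
    (hconv : ∀ x : H, HasSum (fun j => b j x) (B x)) :
    ∃ p : Fin (2 * N) → H →L[ℂ] H, (∀ k, IsProjOp (p k)) ∧ B = ∑ k, p k := by
  classical
  -- Step 1: uniform decomposition into exactly N projections (padding with 0)
  have hq : ∀ j, ∃ qs : Fin N → H →L[ℂ] H, (∀ k, IsProjOp (qs k)) ∧ b j = ∑ k, qs k := by
    intro j
    obtain ⟨m, hm, p, hpk, hbj⟩ := hNj j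
    refine ⟨fun k => if h : (k : ℕ) < m then p ⟨(k : ℕ), h⟩ else 0, fun k => ?_, ?_⟩
    · dsimp only; split
      · exact hpk _
      · exact isProjOp_zero
    · rw [hbj]
      calc ∑ k : Fin m, p k
          = ∑ i ∈ Finset.range m, (fun i : ℕ => if h : i < m then p ⟨i, h⟩ else 0) i := by
            rw [← Fin.sum_univ_eq_sum_range (fun i : ℕ => if h : i < m then p ⟨i, h⟩ else 0) m]
            exact Finset.sum_congr rfl fun k _ => by simp [k.isLt]
        _ = ∑ i ∈ Finset.range N, (fun i : ℕ => if h : i < m then p ⟨i, h⟩ else 0) i :=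
            Finset.sum_subset (Finset.range_subset_range.mpr hm)
              (fun i _ hi => by
                rw [dif_neg]
                exact fun h => hi (Finset.mem_range.mpr h))
        _ = ∑ k : Fin N, (if h : (k : ℕ) < m then p ⟨(k : ℕ), h⟩ else 0) :=
            (Fin.sum_univ_eq_sum_range (fun i : ℕ => if h : i < m then p ⟨i, h⟩ else 0) N).symm
  choose q hqp hqs using hq
  -- Step 2: orthogonality of the blocks
  have hker : ∀ j k (x : H), b j x = 0 → q j k x = 0 := by
    intro j k x hx
    have h2 : RCLike.re ⟪x, b j x⟫_ℂ = 0 := by rw [hx]; simp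
    rw [hqs j, ContinuousLinearMap.sum_apply, inner_sum, map_sum] at h2
    have h1 : ∑ k' : Fin N, ‖q j k' x‖ ^ 2 = 0 := by
      rw [← h2]
      exact Finset.sum_congr rfl fun k' _ => (hqp j k').normSq x
    have h3 : ‖q j k x‖ ^ 2 = 0 :=
      (Finset.sum_eq_zero_iff_of_nonneg (fun k' _ => sq_nonneg _)).mp h1 k (Finset.mem_univ k)
    exact norm_eq_zero.mp ((pow_eq_zero_iff (by norm_num : 2 ≠ 0)).mp h3)
  have hqR : ∀ j k, q j k * rangeProjection (b j) = q j k := by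
    intro j k
    ext x
    have hxk : b j (x - rangeProjection (b j) x) = 0 := by
      have h := DFunLike.congr_fun (comp_rangeProjection (b j) (hpos j).isSelfAdjoint) x
      simp only [ContinuousLinearMap.mul_apply] at h
      rw [map_sub, h, sub_self]
    have h := hker j k _ hxk
    rw [map_sub, sub_eq_zero] at h
    simpa [ContinuousLinearMap.mul_apply] using h.symm
  have hRq : ∀ j k, rangeProjection (b j) * q j k = q j k := by
    intro j k
    have h := congrArg star (hqR j k)
    rwa [star_mul, (rangeProjection_isSelfAdjoint' (b j)).star_eq, ((hqp j k).1).star_eq] at h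
  have hqq : ∀ i j : ℕ, 1 < ((i : ℤ) - j).natAbs → ∀ k k', q i k * q j k' = 0 := by
    intro i j h k k'
    conv_lhs => rw [← hqR i k, ← hRq j k']
    rw [mul_assoc, ← mul_assoc (rangeProjection (b i)), horth i j h, zero_mul, mul_zero]
  -- Step 3: even and odd strong sums
  have hE : ∀ k : Fin N, ∃ P : H →L[ℂ] H, IsProjOp P ∧
      ∀ x, HasSum (fun m => q (2 * m) k x) (P x) := by
    intro k
    refine exists_projOp_hasSum _ (fun m => hqp _ k) (fun m m' hne => hqq _ _ ?_ k k)
    omega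
  have hO : ∀ k : Fin N, ∃ P : H →L[ℂ] H, IsProjOp P ∧
      ∀ x, HasSum (fun m => q (2 * m + 1) k x) (P x) := by
    intro k
    refine exists_projOp_hasSum _ (fun m => hqp _ k) (fun m m' hne => hqq _ _ ?_ k k)
    omega
  choose E hEproj hEsum using hE
  choose O hOproj hOsum using hO
  -- Step 4: assemble
  refine ⟨fun k => Sum.elim E O (finSumFinEquiv.symm (finCongr (two_mul N) k)), fun k => ?_, ?_⟩
  · dsimp only
    rcases h' : finSumFinEquiv.symm (finCongr (two_mul N) k) with k' | k'
    · exact hEproj k'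
    · exact hOproj k'
  · have hsum2 : ∑ k : Fin (2 * N), Sum.elim E O (finSumFinEquiv.symm (finCongr (two_mul N) k))
        = (∑ k : Fin N, E k) + (∑ k : Fin N, O k) := by
      exact (Fintype.sum_equiv ((finCongr (two_mul N)).trans finSumFinEquiv.symm)
        _ (Sum.elim E O) (fun k => rfl)).trans (by simp [Fintype.sum_sum_type])
    rw [hsum2]
    ext x
    have hk : ∀ k : Fin N, HasSum (fun j => q j k x) (E k x + O k x) :=
      fun k => HasSum.even_add_odd (hEsum k x) (hOsum k x)
    have hBx : HasSum (fun j => ∑ k : Fin N, q j k x) (∑ k : Fin N, (E k x + O k x)) :=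
      hasSum_sum fun k _ => hk k
    have heq : (fun j => ∑ k : Fin N, q j k x) = fun j => b j x := by
      funext j
      rw [hqs j, ContinuousLinearMap.sum_apply]
    rw [heq] at hBx
    have hBeq := (hconv x).unique hBx
    rw [hBeq]
    simp [ContinuousLinearMap.sum_apply, ContinuousLinearMap.add_apply, Finset.sum_add_distrib]
end

section
/- Let a ∈ B(H)^+ be a finite positive combination a = Σ_{j=1}^n λ_j p_j with λ_j > 0 and projections p_j, and let δ = min_j λ_j. Then for every j, χ_a(0, δ) ≼ R_a − p_j and p_j ≼ χ_a[δ, ∞). -/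
open scoped InnerProductSpace
open ContinuousLinearMap

variable {H : Type*} [NormedAddCommGroup H] [InnerProductSpace ℂ H] [CompleteSpace H]

set_option maxHeartbeats 1000000
set_option synthInstance.maxHeartbeats 1000000

lemma sa_inner_move (T : H →L[ℂ] H) (hT : IsSelfAdjoint T) (x y : H) :
    ⟪T x, y⟫_ℂ = ⟪x, T y⟫_ℂ := by
  have hadj : ContinuousLinearMap.adjoint T = T := by
    rw [← ContinuousLinearMap.star_eq_adjoint]; exact hT
  conv_lhs => rw [← hadj]
  rw [ContinuousLinearMap.adjoint_inner_left]

lemma proj_adj (p : H →L[ℂ] H) (hp : IsProjOp p) : ContinuousLinearMap.adjoint p = p := by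
  rw [← ContinuousLinearMap.star_eq_adjoint]; exact hp.1

lemma proj_inner_move (p : H →L[ℂ] H) (hp : IsProjOp p) (x y : H) :
    ⟪p x, y⟫_ℂ = ⟪x, p y⟫_ℂ := sa_inner_move p hp.1 x y

lemma proj_idem (p : H →L[ℂ] H) (hp : IsProjOp p) (x : H) : p (p x) = p x := by
  conv_rhs => rw [← hp.2]
  rw [ContinuousLinearMap.mul_apply]

theorem subequiv_of_inj (p q : H →L[ℂ] H) (hp : IsProjOp p) (hq : IsProjOp q)
    (hinj : ∀ x : H, p x = x → q x = 0 → x = 0) : MvNSubequiv p q := by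
  classical
  set c : H →L[ℂ] H := q * p with hc
  have hcx : ∀ x : H, c x = q (p x) := fun x => ContinuousLinearMap.mul_apply q p x
  have hb : 0 ≤ ContinuousLinearMap.adjoint c * c := by
    rw [← ContinuousLinearMap.star_eq_adjoint]; exact star_mul_self_nonneg c
  set s : H →L[ℂ] H := CFC.sqrt (ContinuousLinearMap.adjoint c * c) with hsdef
  have hs0 : 0 ≤ s := CFC.sqrt_nonneg _
  have hss : s * s = ContinuousLinearMap.adjoint c * c := CFC.sqrt_mul_sqrt_self _ hb
  have hs_sa : ContinuousLinearMap.adjoint s = s := by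
    rw [← ContinuousLinearMap.star_eq_adjoint]
    exact ((ContinuousLinearMap.nonneg_iff_isPositive s).mp hs0).isSelfAdjoint
  have hs_move : ∀ x y : H, ⟪s x, y⟫_ℂ = ⟪x, s y⟫_ℂ := by
    intro x y; conv_lhs => rw [← hs_sa]
    rw [ContinuousLinearMap.adjoint_inner_left]
  have hkey : ∀ x y : H, ⟪s x, s y⟫_ℂ = ⟪c x, c y⟫_ℂ := by
    intro x y
    have h1 : s (s y) = (ContinuousLinearMap.adjoint c * c) y := by
      rw [← ContinuousLinearMap.mul_apply, hss]
    rw [hs_move, h1, ContinuousLinearMap.mul_apply, ← ContinuousLinearMap.adjoint_inner_right]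
  have hnorm : ∀ x : H, ‖s x‖ = ‖c x‖ := by
    intro x
    have h := hkey x x
    rw [inner_self_eq_norm_sq_to_K, inner_self_eq_norm_sq_to_K] at h
    have h2 : (‖s x‖ : ℝ) ^ 2 = ‖c x‖ ^ 2 := by exact_mod_cast h
    have := congrArg Real.sqrt h2
    simpa [Real.sqrt_sq (norm_nonneg _)] using this
  have hker : ∀ z : H, p z = 0 → s z = 0 := by
    intro z hz
    have : ⟪s z, s z⟫_ℂ = 0 := by rw [hkey, hcx, hz, map_zero, inner_zero_left]
    simpa using inner_self_eq_zero.mp this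
  -- N = range p is closed, and membership is being a fixed point
  set N : Submodule ℂ H := LinearMap.range (p : H →ₗ[ℂ] H) with hNdef
  have hNmem : ∀ x : H, x ∈ N ↔ p x = x := by
    intro x
    constructor
    · rintro ⟨y, rfl⟩
      exact proj_idem p hp y
    · intro hx; exact ⟨x, hx⟩
  have hNclosed : IsClosed (N : Set H) := by
    have : (N : Set H) = {x | p x = x} := Set.ext fun x => hNmem x
    rw [this]
    exact isClosed_eq p.continuous continuous_id
  haveI : CompleteSpace N := hNclosed.completeSpace_coe
  set D : Submodule ℂ H := LinearMap.range (s : H →ₗ[ℂ] H) with hDdef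
  set M : Submodule ℂ H := D.topologicalClosure with hMdef
  haveI : CompleteSpace M := D.isClosed_topologicalClosure.completeSpace_coe
  have hsD : ∀ x : H, s x ∈ D := fun x => ⟨x, rfl⟩
  -- D ≤ N
  have hDN : D ≤ N := by
    rintro _ ⟨x, rfl⟩
    show s x ∈ N
    rw [← Submodule.orthogonal_orthogonal N, Submodule.mem_orthogonal]
    intro z hz
    have hpz : p z = 0 := by
      have h1 : ⟪p z, p z⟫_ℂ = ⟪z, p (p z)⟫_ℂ := proj_inner_move p hp z (p z)
      rw [proj_idem p hp] at h1
      have h2 : ⟪p z, z⟫_ℂ = 0 := (Submodule.mem_orthogonal N z).mp hz (p z) ⟨z, rfl⟩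
      have h3 : ⟪z, p z⟫_ℂ = 0 := by
        rw [← inner_conj_symm, h2, map_zero]
      rw [h3] at h1
      exact inner_self_eq_zero.mp h1
    have hsz : s z = 0 := hker z hpz
    rw [← hs_move, hsz, inner_zero_left]
  have hMN : M ≤ N := Submodule.topologicalClosure_minimal D hDN hNclosed
  -- N ≤ M
  have hNM : N ≤ M := by
    intro x hx
    have hpx : p x = x := (hNmem x).mp hx
    set w : H := x - ↑(M.orthogonalProjectionOnto x) with hwdef
    have hwO : w ∈ Mᗮ := Submodule.sub_starProjection_mem_orthogonal (K := M) x
    have hPmem : (↑(M.orthogonalProjectionOnto x) : H) ∈ M := (M.orthogonalProjectionOnto x).2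
    have hpw : p w = w := by
      have h1 : p ↑(M.orthogonalProjectionOnto x) = ↑(M.orthogonalProjectionOnto x) :=
        (hNmem _).mp (hMN hPmem)
      rw [hwdef, map_sub, hpx, h1]
    have hsw : s w = 0 := by
      have h1 : ∀ y : H, ⟪y, s w⟫_ℂ = 0 := by
        intro y
        rw [← hs_move]
        exact (Submodule.mem_orthogonal M w).mp hwO (s y) (D.le_topologicalClosure (hsD y))
      have := h1 (s w)
      exact inner_self_eq_zero.mp this
    have hcw : c w = 0 := by
      have : ‖c w‖ = 0 := by rw [← hnorm, hsw, norm_zero]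
      exact norm_eq_zero.mp this
    have hqw : q w = 0 := by rw [← hpw, ← hcx]; exact hcw
    have hw0 : w = 0 := hinj w hpw hqw
    have : x = ↑(M.orthogonalProjectionOnto x) := by
      have := sub_eq_zero.mp hw0
      exact this
    rw [this]
    exact hPmem
  -- the projection onto M is p
  have hPc : ∀ x : H, (↑(M.orthogonalProjectionOnto x) : H) = p x := by
    intro x
    have hmem : p x ∈ M := hNM ⟨x, rfl⟩
    have horth : x - p x ∈ Mᗮ := by
      rw [Submodule.mem_orthogonal]
      intro u hu
      have hpu : p u = u := (hNmem u).mp (hMN hu)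
      calc ⟪u, x - p x⟫_ℂ = ⟪p u, x - p x⟫_ℂ := by rw [hpu]
        _ = ⟪u, p (x - p x)⟫_ℂ := proj_inner_move p hp u _
        _ = 0 := by rw [map_sub, proj_idem p hp, sub_self, inner_zero_right]
    exact Submodule.eq_starProjection_of_mem_orthogonal (K := M) hmem horth
  -- construction of the partial isometry
  have hrep : ∀ d : D, s (Classical.choose d.2) = (d : H) := fun d => Classical.choose_spec d.2
  set φf : D → H := fun d => c (Classical.choose d.2) with hφf
  have φspec : ∀ (d : D) (x : H), s x = (d : H) → φf d = c x := by
    intro d x hx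
    have h0 := hrep d
    have h1 : s (Classical.choose d.2 - x) = 0 := by rw [map_sub, h0, hx, sub_self]
    have h2 : ‖c (Classical.choose d.2 - x)‖ = 0 := by rw [← hnorm, h1, norm_zero]
    have h3 := norm_eq_zero.mp h2
    rw [map_sub, sub_eq_zero] at h3
    exact h3
  have hadd : ∀ d d' : D, φf (d + d') = φf d + φf d' := by
    intro d d'
    obtain ⟨x, hx⟩ := d.2
    obtain ⟨x', hx'⟩ := d'.2
    have hx2 : s x = (d : H) := hx
    have hx2' : s x' = (d' : H) := hx'
    have hxx' : s (x + x') = ((d + d' : D) : H) := by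
      rw [map_add, hx2, hx2']; rfl
    rw [φspec (d + d') (x + x') hxx', φspec d x hx2, φspec d' x' hx2', map_add]
  have hsmul : ∀ (r : ℂ) (d : D), φf (r • d) = r • φf d := by
    intro r d
    obtain ⟨x, hx⟩ := d.2
    have hx2 : s x = (d : H) := hx
    have hrx : s (r • x) = ((r • d : D) : H) := by
      rw [map_smul, hx2]; rfl
    rw [φspec (r • d) (r • x) hrx, φspec d x hx2, map_smul]
  have hnormφ : ∀ d : D, ‖φf d‖ = ‖(d : H)‖ := by
    intro d
    obtain ⟨x, hx⟩ := d.2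
    have hx2 : s x = (d : H) := hx
    rw [φspec d x hx2, ← hnorm, hx2]
  set φ : D →ₗᵢ[ℂ] H :=
    { toFun := φf
      map_add' := hadd
      map_smul' := hsmul
      norm_map' := hnormφ } with hφdef
  have hDM : D ≤ M := D.le_topologicalClosure
  set ι : D →L[ℂ] M := (Submodule.inclusion hDM).mkContinuous 1
    (fun d => by rw [one_mul]; rfl) with hιdef
  have hι : ∀ d : D, ((ι d : M) : H) = (d : H) := fun d => rfl
  have hιiso : Isometry ι := AddMonoidHomClass.isometry_of_norm ι (fun d => rfl)
  have hιdense : DenseRange ι := by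
    intro m
    have h1 : (Subtype.val '' Set.range ι : Set H) = (D : Set H) := by
      ext y
      constructor
      · rintro ⟨m', ⟨d, rfl⟩, rfl⟩
        exact d.2
      · intro hy
        exact ⟨ι ⟨y, hy⟩, ⟨⟨y, hy⟩, rfl⟩, rfl⟩
    rw [closure_subtype, h1]
    have h2 : (m : H) ∈ (M : Set H) := m.2
    rw [← Submodule.topologicalClosure_coe]
    exact h2
  set ψ : M →L[ℂ] H := φ.toContinuousLinearMap.extend ι
    with hψdef
  have hψι : ∀ d : D, ψ (ι d) = φf d := by
    intro d
    exact ContinuousLinearMap.extend_eq (f := φ.toContinuousLinearMap) (e := ι) hιdense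
      hιiso.isUniformInducing d
  have hψnorm : ∀ m : M, ‖ψ m‖ = ‖(m : H)‖ := by
    intro m
    refine hιdense.induction_on m ?_ ?_
    · exact isClosed_eq (continuous_norm.comp ψ.continuous)
        (continuous_norm.comp continuous_subtype_val)
    · intro d
      rw [hψι d]
      exact hnormφ d
  set ψli : M →ₗᵢ[ℂ] H := ⟨(ψ : M →ₗ[ℂ] H), hψnorm⟩ with hψlidef
  have hψinner : ∀ m m' : M, ⟪ψ m, ψ m'⟫_ℂ = ⟪(m : H), (m' : H)⟫_ℂ := by
    intro m m'
    exact ψli.inner_map_map m m'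
  set v : H →L[ℂ] H := ψ ∘L (M.orthogonalProjectionOnto) with hvdef
  have hv : ∀ x : H, v x = ψ (M.orthogonalProjectionOnto x) := fun x => rfl
  -- Claim A : adjoint v * v = p
  have hA : ContinuousLinearMap.adjoint v * v = p := by
    ext y
    apply ext_inner_left ℂ
    intro x
    rw [ContinuousLinearMap.mul_apply, ContinuousLinearMap.adjoint_inner_right]
    rw [hv, hv, hψinner, hPc, hPc, proj_inner_move p hp, proj_idem p hp]
  -- q fixes the range of v
  have hqψ : ∀ m : M, q (ψ m) = ψ m := by
    intro m
    refine hιdense.induction_on m ?_ ?_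
    · exact isClosed_eq (q.continuous.comp ψ.continuous) ψ.continuous
    · intro d
      rw [hψι d]
      obtain ⟨x, hx⟩ := d.2
      have hx2 : s x = (d : H) := hx
      rw [φspec d x hx2, hcx]
      exact proj_idem q hq (p x)
  have hqv : q ∘L v = v := by
    ext x
    exact hqψ (M.orthogonalProjectionOnto x)
  have hvadj_q : ContinuousLinearMap.adjoint v ∘L q = ContinuousLinearMap.adjoint v := by
    have h1 := congrArg ContinuousLinearMap.adjoint hqv
    rw [ContinuousLinearMap.adjoint_comp, proj_adj q hq] at h1
    exact h1
  have hvnorm : ‖v‖ ≤ 1 := by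
    refine ContinuousLinearMap.opNorm_le_bound v zero_le_one fun x => ?_
    rw [hv, hψnorm]
    have h1 : ‖M.orthogonalProjectionOnto x‖ ≤ 1 * ‖x‖ := by
      calc ‖M.orthogonalProjectionOnto x‖ ≤ ‖M.orthogonalProjectionOnto‖ * ‖x‖ :=
            (M.orthogonalProjectionOnto).le_opNorm x
        _ ≤ 1 * ‖x‖ := by
            have := Submodule.orthogonalProjectionOnto_norm_le (K := M)
            exact mul_le_mul_of_nonneg_right this (norm_nonneg x)
    exact h1
  have hvadjnorm : ‖ContinuousLinearMap.adjoint v‖ ≤ 1 := by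
    have : ‖ContinuousLinearMap.adjoint v‖ = ‖v‖ :=
      (ContinuousLinearMap.adjoint : (H →L[ℂ] H) ≃ₗᵢ⋆[ℂ] (H →L[ℂ] H)).norm_map v
    rw [this]; exact hvnorm
  -- Claim B : v * adjoint v ≤ q
  have hB : v * ContinuousLinearMap.adjoint v ≤ q := by
    rw [ContinuousLinearMap.le_def]
    constructor
    · have h1 : IsSelfAdjoint (v * ContinuousLinearMap.adjoint v) := by
        rw [IsSelfAdjoint, star_mul, ContinuousLinearMap.star_eq_adjoint,
          ContinuousLinearMap.star_eq_adjoint, ContinuousLinearMap.adjoint_adjoint]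
      exact ContinuousLinearMap.isSelfAdjoint_iff_isSymmetric.mp (hq.1.sub h1)
    · intro x
      have hsub : (q - v * ContinuousLinearMap.adjoint v) x
          = q x - v (ContinuousLinearMap.adjoint v x) := by
        rw [ContinuousLinearMap.sub_apply, ContinuousLinearMap.mul_apply]
      have hq_re : ⟪q x, x⟫_ℂ = ⟪q x, q x⟫_ℂ := by
        conv_lhs => rw [← proj_idem q hq x]
        rw [proj_inner_move q hq (q x) x]
      have hvv_re : ⟪v (ContinuousLinearMap.adjoint v x), x⟫_ℂ
          = ⟪ContinuousLinearMap.adjoint v x, ContinuousLinearMap.adjoint v x⟫_ℂ := by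
        have := ContinuousLinearMap.adjoint_inner_left (ContinuousLinearMap.adjoint v)
          x (ContinuousLinearMap.adjoint v x)
        rw [ContinuousLinearMap.adjoint_adjoint] at this
        exact this
      have hbound : ‖ContinuousLinearMap.adjoint v x‖ ≤ ‖q x‖ := by
        have h1 : ContinuousLinearMap.adjoint v x = ContinuousLinearMap.adjoint v (q x) := by
          conv_lhs => rw [← hvadj_q]
          rfl
        rw [h1]
        calc ‖ContinuousLinearMap.adjoint v (q x)‖
            ≤ ‖ContinuousLinearMap.adjoint v‖ * ‖q x‖ :=
              (ContinuousLinearMap.adjoint v).le_opNorm (q x)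
          _ ≤ 1 * ‖q x‖ := mul_le_mul_of_nonneg_right hvadjnorm (norm_nonneg _)
          _ = ‖q x‖ := one_mul _
      show 0 ≤ RCLike.re ⟪(q - v * ContinuousLinearMap.adjoint v) x, x⟫_ℂ
      rw [hsub, inner_sub_left, map_sub, hq_re, hvv_re,
        inner_self_eq_norm_sq, inner_self_eq_norm_sq]
      have := mul_self_le_mul_self (norm_nonneg (ContinuousLinearMap.adjoint v x)) hbound
      nlinarith [this]
  exact ⟨v, hA, hB⟩

/-- If `a = ∑ λ_j p_j` with `λ_j > 0` and `δ = min λ_j`, then for every `j`,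
`χ_a(0, δ) ≼ R_a − p_j` and `p_j ≼ χ_a[δ, ∞)`.  Here `e` plays the role of `χ_a(0,δ)`
and `f` that of `χ_a[δ,∞)`. -/
theorem stmt5 (a : H →L[ℂ] H) (n : ℕ) (lam : Fin n → ℝ) (p : Fin n → H →L[ℂ] H)
    (hlam : ∀ j, 0 < lam j) (hp : ∀ j, IsProjOp (p j))
    (hsum : a = ∑ j, ((lam j : ℂ)) • p j)
    (δ : ℝ) (hδ : IsLeast (Set.range lam) δ)
    (e f : H →L[ℂ] H) (he : IsProjOp e) (hf : IsProjOp f)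
    (hef : e + f = rangeProjection a)
    (hcf : a * f = f * a)
    (hflam : (δ : ℂ) • f ≤ a * f)
    (hestrict : ∀ x : H, e x = x → x ≠ 0 → RCLike.re ⟪x, a x⟫_ℂ < δ * ‖x‖ ^ 2) :
    ∀ j, MvNSubequiv e (rangeProjection a - p j) ∧ MvNSubequiv (p j) f := by
  classical
  set N : Submodule ℂ H := (LinearMap.range (a : H →ₗ[ℂ] H)).topologicalClosure with hNdef
  haveI : CompleteSpace N := (LinearMap.range (a : H →ₗ[ℂ] H)).isClosed_topologicalClosure.completeSpace_coe
  set R : H →L[ℂ] H := rangeProjection a with hRdef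
  have hRx : ∀ x : H, R x = ↑(N.orthogonalProjectionOnto x) := fun x => rfl
  -- a is self-adjoint
  have ha : IsSelfAdjoint a := by
    rw [hsum, IsSelfAdjoint, star_sum]
    refine Finset.sum_congr rfl fun j _ => ?_
    rw [star_smul, (hp j).1]
    congr 1
    exact Complex.conj_ofReal _
  have ha_move : ∀ x y : H, ⟪a x, y⟫_ℂ = ⟪x, a y⟫_ℂ := sa_inner_move a ha
  -- the quadratic form of a
  have hquad : ∀ x : H, ⟪x, a x⟫_ℂ = ((∑ j, lam j * ‖p j x‖ ^ 2 : ℝ) : ℂ) := by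
    intro x
    rw [hsum]
    rw [ContinuousLinearMap.sum_apply, inner_sum]
    rw [Complex.ofReal_sum]
    refine Finset.sum_congr rfl fun j _ => ?_
    rw [ContinuousLinearMap.smul_apply, inner_smul_right]
    have h1 : ⟪p j x, p j x⟫_ℂ = ⟪x, p j x⟫_ℂ := by
      rw [proj_inner_move (p j) (hp j), proj_idem (p j) (hp j)]
    rw [← h1, inner_self_eq_norm_sq_to_K, Complex.ofReal_mul, Complex.ofReal_pow]
    rfl
  have hre : ∀ x : H, RCLike.re ⟪x, a x⟫_ℂ = ∑ j, lam j * ‖p j x‖ ^ 2 := by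
    intro x
    rw [hquad x]
    exact Complex.ofReal_re _
  -- lower bound on fixed vectors of p j
  have hlow : ∀ (j : Fin n) (x : H), p j x = x → δ * ‖x‖ ^ 2 ≤ RCLike.re ⟪x, a x⟫_ℂ := by
    intro j x hx
    rw [hre]
    have h1 : lam j * ‖p j x‖ ^ 2 ≤ ∑ k, lam k * ‖p k x‖ ^ 2 := by
      refine Finset.single_le_sum (f := fun k => lam k * ‖p k x‖ ^ 2) (fun k _ => ?_) (Finset.mem_univ j)
      exact mul_nonneg (hlam k).le (sq_nonneg _)
    rw [hx] at h1
    refine le_trans ?_ h1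
    have hdj : δ ≤ lam j := hδ.2 ⟨j, rfl⟩
    exact mul_le_mul_of_nonneg_right hdj (sq_nonneg _)
  -- no nonzero vector is fixed by both e and some p j
  have hcontra : ∀ (j : Fin n) (x : H), e x = x → p j x = x → x = 0 := by
    intro j x hex hpx
    by_contra hx0
    exact absurd (hlow j x hpx) (not_le.mpr (hestrict x hex hx0))
  -- membership in N
  have hmemN : ∀ x : H, x ∈ N → R x = x := by
    intro x hx
    rw [hRx]; exact (Submodule.starProjection_eq_self_iff (K := N)).mpr hx
  have horthN : ∀ z : H, z ∈ Nᗮ → ∀ j, p j z = 0 := by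
    intro z hz j
    have haz : a z = 0 := by
      apply ext_inner_left ℂ
      intro y
      rw [inner_zero_right, ← ha_move]
      exact (Submodule.mem_orthogonal N z).mp hz (a y)
        ((LinearMap.range (a : H →ₗ[ℂ] H)).le_topologicalClosure ⟨y, rfl⟩)
    have h0 : (∑ k, lam k * ‖p k z‖ ^ 2) = 0 := by
      rw [← hre, haz, inner_zero_right, map_zero]
    have h1 : ∀ k ∈ Finset.univ, 0 ≤ lam k * ‖p k z‖ ^ 2 :=
      fun k _ => mul_nonneg (hlam k).le (sq_nonneg _)
    have h2 := (Finset.sum_eq_zero_iff_of_nonneg h1).mp h0 j (Finset.mem_univ j)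
    have h3 : ‖p j z‖ ^ 2 = 0 := by
      rcases mul_eq_zero.mp h2 with h | h
      · exact absurd h (hlam j).ne'
      · exact h
    rw [sq_eq_zero_iff, norm_eq_zero] at h3
    exact h3
  have hpfix : ∀ (j : Fin n) (x : H), p j x = x → R x = x := by
    intro j x hx
    apply hmemN
    rw [← Submodule.orthogonal_orthogonal N, Submodule.mem_orthogonal]
    intro z hz
    rw [← hx, ← proj_inner_move (p j) (hp j), horthN z hz j, inner_zero_left]
  -- R is a projection
  have hRproj : IsProjOp R := by
    constructor
    · rw [ContinuousLinearMap.isSelfAdjoint_iff_isSymmetric]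
      intro x y
      show ⟪R x, y⟫_ℂ = ⟪x, R y⟫_ℂ
      rw [hRx, hRx]
      exact Submodule.inner_starProjection_left_eq_right (K := N) x y
    · ext x
      rw [ContinuousLinearMap.mul_apply]
      exact hmemN (R x) (by rw [hRx]; exact (N.orthogonalProjectionOnto x).2)
  -- f kills the range of e
  have hfe : ∀ x : H, f (e x) = 0 := by
    intro x
    have hsum2 : ∀ z : H, e (f z) + f (e z) = 0 := by
      intro z
      have h1 : R (R z) = R z := proj_idem R hRproj z
      rw [← hef] at h1
      simp only [ContinuousLinearMap.add_apply, map_add] at h1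
      rw [proj_idem e he z, proj_idem f hf z] at h1
      -- h1 : e z + e (f z) + (f (e z) + f z) = e z + f z
      have h2 : e (f z) + f (e z) = 0 := by
        have := h1
        abel_nf at this ⊢
        linear_combination (norm := abel_nf) this
      exact h2
    have hefe : e (f (e x)) = 0 := by
      have h1 := hsum2 (e x)
      rw [proj_idem e he x] at h1
      -- h1 : e (f (e x)) + f (e x) = 0
      have h2 := congrArg e h1
      rw [map_add, proj_idem e he (f (e x)), map_zero] at h2
      -- h2 : e (f (e x)) + e (f (e x)) = 0
      have h3 : (2 : ℂ) • e (f (e x)) = 0 := by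
        rw [two_smul]; exact h2
      have := smul_eq_zero.mp h3
      rcases this with h | h
      · norm_num at h
      · exact h
    have h4 : ⟪f (e x), f (e x)⟫_ℂ = 0 := by
      rw [proj_inner_move f hf (e x) (f (e x)), proj_idem f hf (e x),
        proj_inner_move e he x (f (e x)), hefe, inner_zero_right]
    exact inner_self_eq_zero.mp h4
  have hef_apply : ∀ x : H, e x + f x = R x := by
    intro x
    rw [← hef]
    rfl
  have hefix : ∀ x : H, e x = x → R x = x := by
    intro x hx
    have h1 : f x = 0 := by rw [← hx]; exact hfe x
    rw [← hef_apply, hx, h1, add_zero]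
  have hfToE : ∀ (j : Fin n) (x : H), p j x = x → f x = 0 → e x = x := by
    intro j x hpx hfx
    have h1 : R x = x := hpfix j x hpx
    have h2 := hef_apply x
    rw [hfx, add_zero, h1] at h2
    exact h2
  have hRp : ∀ j, IsProjOp (R - p j) := by
    intro j
    have hRpj : R * p j = p j := by
      ext x
      rw [ContinuousLinearMap.mul_apply]
      exact hpfix j (p j x) (proj_idem (p j) (hp j) x)
    have hpjR : p j * R = p j := by
      have h1 := congrArg star hRpj
      rw [star_mul, (hp j).1, hRproj.1] at h1
      exact h1
    constructor
    · exact hRproj.1.sub (hp j).1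
    · rw [sub_mul, mul_sub, mul_sub, hRproj.2, hRpj, hpjR, (hp j).2]
      abel
  intro j
  constructor
  · refine subequiv_of_inj e (R - p j) he (hRp j) ?_
    intro x hex hzero
    have h1 : R x = x := hefix x hex
    have h2 : p j x = x := by
      rw [ContinuousLinearMap.sub_apply, h1, sub_eq_zero] at hzero
      exact hzero.symm
    exact hcontra j x hex h2
  · refine subequiv_of_inj (p j) f (hp j) hf ?_
    intro x hpx hfx
    exact hcontra j x (hfToE j x hpx hfx) hpx
end

section
/- Let a ∈ B(H)^+ with a = Σ_{j=1}^n p_j a sum of n nonzero projections, and suppose there exist mutually orthogonal nonzero projections q_1,…,q_n with Σ q_j = I and p_j equivalent to q_j for each j. Then there exists an isometry-like partial isometry v with v*v = R_a and q_j v a v* q_j = q_j for all j. -/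
open scoped InnerProductSpace
open ContinuousLinearMap
set_option synthInstance.maxHeartbeats 1000000
set_option maxHeartbeats 1000000
set_option linter.unusedSectionVars false
set_option linter.unusedVariables false

variable {H : Type*} [NormedAddCommGroup H] [InnerProductSpace ℂ H] [CompleteSpace H]

lemma aux_polar (t w : H →L[ℂ] H) (hnorm : ∀ x, ‖w x‖ = ‖t x‖) :
    ∃ v : H →L[ℂ] H, (∀ x, v (t x) = w x) ∧
      ContinuousLinearMap.adjoint v * v =
        ((LinearMap.range (t : H →ₗ[ℂ] H)).topologicalClosure).subtypeL ∘L
          Submodule.orthogonalProjectionOnto (LinearMap.range (t : H →ₗ[ℂ] H)).topologicalClosure := by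
  set R : Submodule ℂ H := LinearMap.range (t : H →ₗ[ℂ] H) with hR
  set K : Submodule ℂ H := R.topologicalClosure with hKdef
  have hwd : ∀ x x' : H, t x = t x' → w x = w x' := by
    intro x x' h
    have h0 : ‖w x - w x'‖ = 0 := by
      rw [← map_sub, hnorm, map_sub, h, sub_self, norm_zero]
    simpa [sub_eq_zero] using norm_eq_zero.mp h0
  have mem_ex : ∀ y : R, ∃ x : H, t x = (y : H) := fun y => LinearMap.mem_range.mp y.2
  set f : R → H := fun y => w (mem_ex y).choose with hfdef
  have hf : ∀ (y : R) (x : H), t x = (y : H) → f y = w x := by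
    intro y x hx
    exact hwd _ _ ((mem_ex y).choose_spec.trans hx.symm)
  have hadd : ∀ y z : R, f (y + z) = f y + f z := by
    intro y z
    obtain ⟨x, hx⟩ := mem_ex y
    obtain ⟨x', hx'⟩ := mem_ex z
    rw [hf y x hx, hf z x' hx', ← map_add, hf (y + z) (x + x') (by simp [map_add, hx, hx'])]
  have hsmul : ∀ (c : ℂ) (y : R), f (c • y) = c • f y := by
    intro c y
    obtain ⟨x, hx⟩ := mem_ex y
    rw [hf y x hx, ← map_smul, hf (c • y) (c • x) (by simp [map_smul, hx])]
  have hnormf : ∀ y : R, ‖f y‖ = ‖y‖ := by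
    intro y
    obtain ⟨x, hx⟩ := mem_ex y
    rw [hf y x hx, hnorm, hx]
    rfl
  let ψ : R →ₗᵢ[ℂ] H :=
    { toFun := f
      map_add' := hadd
      map_smul' := hsmul
      norm_map' := hnormf }
  let ι : R →ₗᵢ[ℂ] K :=
    { toLinearMap := Submodule.inclusion R.le_topologicalClosure
      norm_map' := fun x => rfl }
  let e : R →L[ℂ] K := ι.toContinuousLinearMap
  have h_e : IsUniformInducing ⇑e := ι.isometry.isUniformInducing
  have h_dense : DenseRange ⇑e := by
    intro z
    have h1 : (Subtype.val '' Set.range ⇑e) = (R : Set H) := by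
      ext u
      constructor
      · rintro ⟨_, ⟨y, rfl⟩, rfl⟩; exact y.2
      · intro hu; exact ⟨e ⟨u, hu⟩, ⟨⟨u, hu⟩, rfl⟩, rfl⟩
    rw [mem_closure_iff_clusterPt]
    have : (z : H) ∈ closure (R : Set H) := by
      rw [← Submodule.topologicalClosure_coe]; exact z.2
    rw [← mem_closure_iff_clusterPt, closure_subtype, h1]
    exact this
  let vbar : K →L[ℂ] H := ψ.toContinuousLinearMap.extend e
  have hvb : ∀ y : R, vbar (e y) = ψ y := fun y =>
    ContinuousLinearMap.extend_eq _ h_dense h_e y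
  have hvbnorm : ∀ u : K, ‖vbar u‖ = ‖u‖ := by
    intro u
    refine h_dense.induction_on u (isClosed_eq (vbar.continuous.norm) continuous_norm) ?_
    intro y
    rw [hvb y]
    exact (hnormf y).trans (ι.norm_map y).symm
  let vIso : K →ₗᵢ[ℂ] H := ⟨(vbar : K →ₗ[ℂ] H), hvbnorm⟩
  let P := Submodule.orthogonalProjectionOnto K
  refine ⟨vIso.toContinuousLinearMap ∘L P, ?_, ?_⟩
  · intro x
    have hmemR : t x ∈ R := LinearMap.mem_range_self _ x
    have hmem : t x ∈ K := R.le_topologicalClosure hmemR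
    have hP : P (t x) = ⟨t x, hmem⟩ :=
      Submodule.orthogonalProjectionOnto_mem_subspace_eq_self (⟨t x, hmem⟩ : K)
    have he : (⟨t x, hmem⟩ : K) = e ⟨t x, hmemR⟩ := rfl
    show vIso (P (t x)) = w x
    rw [hP, he]
    show vbar (e ⟨t x, hmemR⟩) = w x
    rw [hvb]
    exact hf ⟨t x, hmemR⟩ x rfl
  · refine ContinuousLinearMap.ext fun x => ?_
    refine ext_inner_left ℂ fun y => ?_
    have lhs : ⟪y, (ContinuousLinearMap.adjoint (vIso.toContinuousLinearMap ∘L P) *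
        (vIso.toContinuousLinearMap ∘L P)) x⟫_ℂ = ⟪vIso (P y), vIso (P x)⟫_ℂ := by
      rw [ContinuousLinearMap.mul_apply, ContinuousLinearMap.adjoint_inner_right]
      rfl
    rw [lhs, vIso.inner_map_map]
    have : ⟪P y, P x⟫_ℂ = ⟪((P y : H) : H), ((P x : H) : H)⟫_ℂ := rfl
    rw [this]
    show _ = ⟪y, ((P x : H) : H)⟫_ℂ
    exact Submodule.inner_orthogonalProjectionOnto_eq_of_mem_right (P x) y

lemma aux_star_mul_self_eq_zero {z : H →L[ℂ] H} (h : star z * z = 0) :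
    z = 0 := by
  have h1 : ‖star z * z‖ = ‖z‖ * ‖z‖ := CStarRing.norm_star_mul_self
  rw [h, norm_zero] at h1
  have := mul_self_eq_zero.mp h1.symm
  simpa [norm_eq_zero] using this

lemma aux_orth_range (s : H →L[ℂ] H) (hs : ContinuousLinearMap.adjoint s = s) :
    (LinearMap.range (s : H →ₗ[ℂ] H))ᗮ = LinearMap.ker (s : H →ₗ[ℂ] H) := by
  ext y
  simp only [Submodule.mem_orthogonal, LinearMap.mem_ker, ContinuousLinearMap.coe_coe]
  constructor
  · intro h
    have h2 : ∀ x : H, ⟪x, s y⟫_ℂ = 0 := by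
      intro x
      have := h (s x) (LinearMap.mem_range_self _ x)
      rwa [← hs, ContinuousLinearMap.adjoint_inner_left] at this
    have := h2 (s y)
    rwa [inner_self_eq_zero] at this
  · rintro h u ⟨x, rfl⟩
    show ⟪s x, y⟫_ℂ = 0
    rw [← hs, ContinuousLinearMap.adjoint_inner_left, h, inner_zero_right]

lemma aux_proj_congr {K K' : Submodule ℂ H} [CompleteSpace K]
    [CompleteSpace K'] (h : K = K') :
    K.subtypeL ∘L K.orthogonalProjectionOnto = K'.subtypeL ∘L K'.orthogonalProjectionOnto := by
  subst h; rfl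

/-- If `a = ∑ p_j` is a sum of `n` nonzero projections and there are mutually orthogonal
nonzero projections `q_j` summing to `I` with `p_j ∼ q_j`, then there is a partial
isometry `v` with `v*v = R_a` and `q_j (v a v*) q_j = q_j` for all `j`. -/
theorem stmt10 (a : H →L[ℂ] H) (n : ℕ)
    (p q : Fin n → H →L[ℂ] H)
    (hp : ∀ j, IsProjOp (p j) ∧ p j ≠ 0)
    (hq : ∀ j, IsProjOp (q j) ∧ q j ≠ 0)
    (hqorth : ∀ i j, i ≠ j → q i * q j = 0)
    (hqsum : ∑ j, q j = 1)
    (hsum : a = ∑ j, p j)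
    (hequiv : ∀ j, MvNEquiv (p j) (q j)) :
    ∃ v : H →L[ℂ] H, ContinuousLinearMap.adjoint v * v = rangeProjection a ∧
      ∀ j, q j * (v * a * ContinuousLinearMap.adjoint v) * q j = q j := by
  classical
  choose V hV1 hV2 using hequiv
  have hV1' : ∀ j, star (V j) * V j = p j := by
    intro j; rw [star_eq_adjoint]; exact hV1 j
  have hV2' : ∀ j, V j * star (V j) = q j := by
    intro j; rw [star_eq_adjoint]; exact hV2 j
  have hpstar : ∀ j, star (p j) = p j := fun j => (hp j).1.1
  have hqstar : ∀ j, star (q j) = q j := fun j => (hq j).1.1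
  have hpmul : ∀ j, p j * p j = p j := fun j => (hp j).1.2
  -- partial isometry property
  have hVp : ∀ j, V j * p j = V j := by
    intro j
    have key : star (V j * p j - V j) * (V j * p j - V j) = 0 := by
      have expand : star (V j * p j - V j) * (V j * p j - V j)
          = p j * (star (V j) * V j) * p j - p j * (star (V j) * V j)
            - (star (V j) * V j) * p j + star (V j) * V j := by
        rw [star_sub, star_mul, hpstar]
        noncomm_ring
      rw [expand, hV1' j]
      rw [show p j * p j * p j = p j by rw [hpmul, hpmul], hpmul]
      abel
    have := aux_star_mul_self_eq_zero key
    rwa [sub_eq_zero] at this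
  have hqV : ∀ j, q j * V j = V j := by
    intro j
    rw [← hV2' j, mul_assoc, hV1' j, hVp j]
  have hVq : ∀ j, star (V j) * q j = star (V j) := by
    intro j
    rw [← hqstar j, ← star_mul, hqV j]
  have hqV0 : ∀ i j, i ≠ j → q i * V j = 0 := by
    intro i j h
    rw [← hqV j, ← mul_assoc, hqorth i j h, zero_mul]
  set w : H →L[ℂ] H := ∑ j, V j with hw
  have hcross : ∀ j k, j ≠ k → star (V j) * V k = 0 := by
    intro j k hjk
    calc star (V j) * V k = (star (V j) * q j) * (q k * V k) := by rw [hVq j, hqV k]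
    _ = star (V j) * ((q j * q k) * V k) := by noncomm_ring
    _ = 0 := by rw [hqorth j k hjk, zero_mul, mul_zero]
  have hww : star w * w = a := by
    rw [hsum, hw, star_sum, Finset.sum_mul_sum]
    refine Finset.sum_congr rfl fun j _ => ?_
    rw [Finset.sum_eq_single j (fun k _ hk => hcross j k (Ne.symm hk)) (by simp), hV1' j]
  have ha : (0 : H →L[ℂ] H) ≤ a := by
    rw [hsum]
    refine Finset.sum_nonneg fun j _ => ?_
    calc (0 : H →L[ℂ] H) ≤ star (p j) * p j := star_mul_self_nonneg _
    _ = p j := by rw [hpstar, hpmul]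
  set t : H →L[ℂ] H := CFC.sqrt a with htdef
  have htt : t * t = a := CFC.sqrt_mul_sqrt_self a ha
  have htsa : star t = t := (IsSelfAdjoint.of_nonneg (CFC.sqrt_nonneg a)).star_eq
  have hta : ContinuousLinearMap.adjoint t = t := by rw [← star_eq_adjoint]; exact htsa
  have haa : ContinuousLinearMap.adjoint a = a := by
    rw [← star_eq_adjoint]; exact (IsSelfAdjoint.of_nonneg ha).star_eq
  have hnorm : ∀ x, ‖w x‖ = ‖t x‖ := by
    intro x
    have h1 : ⟪w x, w x⟫_ℂ = ⟪t x, t x⟫_ℂ := by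
      have e1 : ⟪x, (star w * w) x⟫_ℂ = ⟪w x, w x⟫_ℂ := by
        rw [ContinuousLinearMap.mul_apply, star_eq_adjoint,
          ContinuousLinearMap.adjoint_inner_right]
      have e2 : ⟪x, (t * t) x⟫_ℂ = ⟪t x, t x⟫_ℂ := by
        have := ContinuousLinearMap.adjoint_inner_right t x (t x)
        rw [hta] at this
        rw [ContinuousLinearMap.mul_apply]
        exact this
      rw [← e1, ← e2, hww, htt]
    have h2 : ‖w x‖ * ‖w x‖ = ‖t x‖ * ‖t x‖ := by
      rw [← inner_self_eq_norm_mul_norm (𝕜 := ℂ), ← inner_self_eq_norm_mul_norm (𝕜 := ℂ), h1]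
    exact mul_self_inj (norm_nonneg _) (norm_nonneg _) |>.mp h2
  obtain ⟨v, hvt, hvv⟩ := aux_polar t w hnorm
  have hker : LinearMap.ker (t : H →ₗ[ℂ] H) = LinearMap.ker (a : H →ₗ[ℂ] H) := by
    ext x
    simp only [LinearMap.mem_ker, ContinuousLinearMap.coe_coe]
    constructor
    · intro h
      have : a x = t (t x) := by rw [← htt]; rfl
      rw [this, h, map_zero]
    · intro h
      have h3 : ⟪t x, t x⟫_ℂ = 0 := by
        have : ⟪x, (t * t) x⟫_ℂ = ⟪t x, t x⟫_ℂ := by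
          have h5 := ContinuousLinearMap.adjoint_inner_right t x (t x)
          rw [hta] at h5
          rw [ContinuousLinearMap.mul_apply]
          exact h5
        rw [← this, htt, h, inner_zero_right]
      rwa [inner_self_eq_zero] at h3
  have hKeq : (LinearMap.range (t : H →ₗ[ℂ] H)).topologicalClosure
      = (LinearMap.range (a : H →ₗ[ℂ] H)).topologicalClosure := by
    rw [← Submodule.orthogonal_orthogonal_eq_closure,
      ← Submodule.orthogonal_orthogonal_eq_closure,
      aux_orth_range t hta, aux_orth_range a haa, hker]
  refine ⟨v, ?_, ?_⟩
  · rw [rangeProjection]; rw [← aux_proj_congr hKeq]; exact hvv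
  · intro j
    have hvt' : v * t = w := ContinuousLinearMap.ext hvt
    have hadjw : t * ContinuousLinearMap.adjoint v = ContinuousLinearMap.adjoint w := by
      rw [← hvt', ← star_eq_adjoint, ← star_eq_adjoint, star_mul, htsa]
    have hvav : v * a * ContinuousLinearMap.adjoint v = w * ContinuousLinearMap.adjoint w := by
      calc v * a * ContinuousLinearMap.adjoint v
          = (v * t) * (t * ContinuousLinearMap.adjoint v) := by rw [← htt]; noncomm_ring
      _ = w * ContinuousLinearMap.adjoint w := by rw [hvt', hadjw]
    rw [hvav]
    have h1 : q j * w = V j := by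
      rw [hw, Finset.mul_sum]
      rw [Finset.sum_eq_single j (fun k _ hk => hqV0 j k (Ne.symm hk)) (by simp)]
      exact hqV j
    have h2 : ContinuousLinearMap.adjoint w * q j = star (V j) := by
      rw [← star_eq_adjoint, ← hqstar j, ← star_mul, h1]
    calc q j * (w * ContinuousLinearMap.adjoint w) * q j
        = (q j * w) * (ContinuousLinearMap.adjoint w * q j) := by noncomm_ring
    _ = V j * star (V j) := by rw [h1, h2]
    _ = q j := hV2' j
end

section
/- Let e₀, e₁, e₂, … be mutually orthogonal rank-one projections in B(H), let 1 < α ≤ 2 and 0 ≤ β < 1, and define n₁ = ⌈(1−β)/(α−1)⌉ and β₁ = β + n₁α − ⌊β + n₁α⌋. Then the operator a₁ = β e₀ + α Σ_{j=1}^{n₁−1} e_j + (α−β₁) e_{n₁} is positive with rank(a₁) ≤ tr(a₁), tr(a₁) = ⌊β + n₁α⌋ ∈ ℕ, and tr(a₁) ≤ ⌊α²/(α−1)⌋. -/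
open scoped InnerProductSpace
open ContinuousLinearMap

variable {H : Type*} [NormedAddCommGroup H] [InnerProductSpace ℂ H] [CompleteSpace H]

lemma proj_repr (p : H →L[ℂ] H) (hp : IsProjOp p)
    (hr : Module.finrank ℂ (LinearMap.range (p : H →ₗ[ℂ] H)) = 1) :
    ∃ u : H, ‖u‖ = 1 ∧ ∀ x, p x = ⟪u, x⟫_ℂ • u := by
  haveI : FiniteDimensional ℂ (LinearMap.range (p : H →ₗ[ℂ] H)) :=
    FiniteDimensional.of_finrank_pos (by rw [hr]; norm_num)
  have hne : (LinearMap.range (p : H →ₗ[ℂ] H)) ≠ ⊥ := by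
    intro h
    rw [h] at hr
    simp at hr
  obtain ⟨v, hv, hv0⟩ := Submodule.exists_mem_ne_zero_of_ne_bot hne
  set u : H := ‖v‖⁻¹ • v with hu_def
  have hu0 : u ≠ 0 := smul_ne_zero (by simp [norm_ne_zero_iff.mpr hv0]) hv0
  have hnu : ‖u‖ = 1 := by
    rw [hu_def, norm_smul]
    simp [norm_ne_zero_iff.mpr hv0]
  have hu_mem : u ∈ LinearMap.range (p : H →ₗ[ℂ] H) :=
    Submodule.smul_mem _ _ hv
  have hpu : p u = u := by
    obtain ⟨w, hw⟩ := hu_mem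
    have hw' : p w = u := hw
    have h2 : p (p w) = p w := by
      rw [← ContinuousLinearMap.mul_apply, hp.2]
    rw [← hw']; exact h2
  have hspan : Submodule.span ℂ {u} = LinearMap.range (p : H →ₗ[ℂ] H) := by
    apply Submodule.eq_of_le_of_finrank_eq
    · exact Submodule.span_le.mpr (by simpa using hu_mem)
    · rw [hr, finrank_span_singleton hu0]
  have hsym : ∀ x y : H, ⟪p x, y⟫_ℂ = ⟪x, p y⟫_ℂ :=
    fun x y => (isSelfAdjoint_iff_isSymmetric).mp hp.1 x y
  refine ⟨u, hnu, fun x => ?_⟩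
  have hmem : p x ∈ Submodule.span ℂ ({u} : Set H) := by
    rw [hspan]; exact LinearMap.mem_range_self _ x
  obtain ⟨c, hc⟩ := Submodule.mem_span_singleton.mp hmem
  have huu : ⟪u, u⟫_ℂ = 1 := by
    rw [inner_self_eq_norm_sq_to_K, hnu]; norm_num
  have h1 : ⟪u, p x⟫_ℂ = c := by
    rw [← hc, inner_smul_right, huu, mul_one]
  have h2 : ⟪u, p x⟫_ℂ = ⟪u, x⟫_ℂ := by
    rw [← hsym u x, hpu]
  rw [← hc, ← h1, h2]

lemma proj_hasSum {ι : Type*} (bb : HilbertBasis ι ℂ H) (p : H →L[ℂ] H)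
    (hp : IsProjOp p) (hr : Module.finrank ℂ (LinearMap.range (p : H →ₗ[ℂ] H)) = 1) :
    HasSum (fun i => RCLike.re ⟪bb i, p (bb i)⟫_ℂ) 1 := by
  obtain ⟨u, hnu, hrep⟩ := proj_repr p hp hr
  have h := (bb.hasSum_inner_mul_inner u u).mapL Complex.reCLM
  have huu : (⟪u, u⟫_ℂ).re = 1 := by
    rw [inner_self_eq_norm_sq_to_K, hnu]; norm_num
  convert h using 2 with i
  · rw [hrep (bb i), inner_smul_right]
    simp [RCLike.re]
  · simp [huu, hnu]

lemma proj_re_inner_nonneg (p : H →L[ℂ] H) (hp : IsProjOp p) (x : H) :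
    0 ≤ RCLike.re ⟪p x, x⟫_ℂ := by
  have hsym : ∀ x y : H, ⟪p x, y⟫_ℂ = ⟪x, p y⟫_ℂ :=
    fun x y => (isSelfAdjoint_iff_isSymmetric).mp hp.1 x y
  have : ⟪p x, x⟫_ℂ = ⟪p x, p x⟫_ℂ := by
    conv_lhs => rw [show p x = p (p x) by rw [← ContinuousLinearMap.mul_apply, hp.2]]
    rw [hsym (p x) x]
  rw [this]
  exact inner_self_nonneg

lemma finrank_finset_sup_le (f : ℕ → Submodule ℂ H) (hf : ∀ j, FiniteDimensional ℂ (f j))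
    (s : Finset ℕ) :
    Module.finrank ℂ ↥(s.sup f) ≤ ∑ j ∈ s, Module.finrank ℂ (f j) := by
  classical
  induction s using Finset.induction with
  | empty => simp
  | @insert a s hns ih =>
    rw [Finset.sup_insert, Finset.sum_insert hns]
    haveI := hf a
    haveI : FiniteDimensional ℂ ↥(s.sup f) := Submodule.finiteDimensional_finset_sup s f
    exact (Submodule.finrank_add_le_finrank_add_finrank _ _).trans (add_le_add_right ih _)


/-- Arithmetic core of the block decomposition: with mutually orthogonal rank-one
projections `e j`, `1 < α ≤ 2`, `0 ≤ β < 1`, `n₁ = ⌈(1−β)/(α−1)⌉` and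
`β₁ = β + n₁α − ⌊β + n₁α⌋`, the operator
`a₁ = β e₀ + α ∑_{j=1}^{n₁−1} e_j + (α−β₁) e_{n₁}` is positive with
`rank a₁ ≤ tr a₁`, `tr a₁ = ⌊β + n₁α⌋ ∈ ℕ`, and `tr a₁ ≤ ⌊α²/(α−1)⌋`. -/
theorem stmt16 {ι : Type*} (bb : HilbertBasis ι ℂ H)
    (e : ℕ → H →L[ℂ] H) (he : ∀ j, IsProjOp (e j))
    (hrank : ∀ j, Module.finrank ℂ (LinearMap.range (e j : H →ₗ[ℂ] H)) = 1)
    (horth : ∀ i j, i ≠ j → e i * e j = 0)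
    (α β : ℝ) (hα : 1 < α) (hα2 : α ≤ 2) (hβ : 0 ≤ β) (hβ1 : β < 1)
    (n₁ : ℕ) (hn₁ : n₁ = ⌈(1 - β) / (α - 1)⌉₊)
    (β₁ : ℝ) (hβ₁ : β₁ = β + n₁ * α - ⌊β + n₁ * α⌋)
    (a₁ : H →L[ℂ] H)
    (ha₁ : a₁ = (β : ℂ) • e 0 + (α : ℂ) • ∑ j ∈ Finset.Ico 1 n₁, e j +
      ((α - β₁ : ℝ) : ℂ) • e n₁) :
    a₁.IsPositive ∧
      (Module.finrank ℂ (LinearMap.range (a₁ : H →ₗ[ℂ] H)) : ℝ) ≤ traceAlong bb a₁ ∧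
      traceAlong bb a₁ = (⌊β + n₁ * α⌋ : ℝ) ∧ 1 ≤ ⌊β + n₁ * α⌋ ∧
      ⌊β + n₁ * α⌋ ≤ ⌊α ^ 2 / (α - 1)⌋ := by
  have hα1 : (0:ℝ) < α - 1 := by linarith
  -- basic facts about n₁
  have hn₁pos : 1 ≤ n₁ := by
    rw [hn₁]
    exact Nat.one_le_iff_ne_zero.mpr (Nat.ceil_pos.mpr (div_pos (by linarith) hα1)).ne'
  have hceil : (1 - β) / (α - 1) ≤ (n₁ : ℝ) := by rw [hn₁]; exact Nat.le_ceil _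
  have hge : 1 - β ≤ (n₁ : ℝ) * (α - 1) := by
    rw [div_le_iff₀ hα1] at hceil; linarith
  have hfloor_ge : ((n₁ : ℝ) + 1) ≤ β + n₁ * α := by nlinarith
  have hfloor_ge' : (n₁ : ℤ) + 1 ≤ ⌊β + n₁ * α⌋ := by
    apply Int.le_floor.mpr
    push_cast
    exact hfloor_ge
  -- β₁ is a fractional part
  have hβ₁nonneg : 0 ≤ β₁ := by rw [hβ₁]; exact sub_nonneg.mpr (Int.floor_le _)
  have hβ₁lt : β₁ < 1 := by
    rw [hβ₁]; have := Int.lt_floor_add_one (β + n₁ * α); linarith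
  have hαβ₁ : 0 ≤ α - β₁ := by linarith
  -- positivity
  have hsa : IsSelfAdjoint a₁ := by
    rw [ha₁]
    have hsum : IsSelfAdjoint (∑ j ∈ Finset.Ico 1 n₁, e j) := by
      rw [IsSelfAdjoint, star_sum]
      exact Finset.sum_congr rfl fun j _ => (he j).1
    have hr : ∀ r : ℝ, IsSelfAdjoint ((r : ℂ)) := fun r => Complex.conj_ofReal r
    exact ((IsSelfAdjoint.smul (hr β) (he 0).1).add
      (IsSelfAdjoint.smul (hr α) hsum)).add (IsSelfAdjoint.smul (hr _) (he n₁).1)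
  have hpos : a₁.IsPositive := by
    refine ⟨isSelfAdjoint_iff_isSymmetric.mp hsa, fun x => ?_⟩
    have hterm : ∀ j, 0 ≤ RCLike.re ⟪(e j) x, x⟫_ℂ := fun j =>
      proj_re_inner_nonneg (e j) (he j) x
    rw [reApplyInnerSelf, ha₁]
    simp only [ContinuousLinearMap.add_apply, ContinuousLinearMap.coe_smul',
      Pi.smul_apply, ContinuousLinearMap.sum_apply, inner_add_left, inner_smul_left,
      inner_sum, map_add, map_mul]
    have expand : ∀ (r : ℝ) (z : ℂ),
        RCLike.re ((starRingEnd ℂ) (r : ℂ) * z) = r * RCLike.re z := by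
      intro r z
      rw [Complex.conj_ofReal]
      simp [Complex.re_ofReal_mul]
    rw [expand β, expand α, expand (α - β₁)]
    have : RCLike.re ⟪∑ j ∈ Finset.Ico 1 n₁, (e j) x, x⟫_ℂ =
        ∑ j ∈ Finset.Ico 1 n₁, RCLike.re ⟪(e j) x, x⟫_ℂ := by
      rw [sum_inner]; exact map_sum _ _ _
    rw [this]
    exact add_nonneg (add_nonneg (mul_nonneg hβ (hterm 0))
      (mul_nonneg (by linarith) (Finset.sum_nonneg fun j _ => hterm j)))
      (mul_nonneg hαβ₁ (hterm n₁))
  -- trace computation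
  have hg : ∀ j, HasSum (fun i => RCLike.re ⟪bb i, (e j) (bb i)⟫_ℂ) 1 :=
    fun j => proj_hasSum bb (e j) (he j) (hrank j)
  have hmid : HasSum (fun i => ∑ j ∈ Finset.Ico 1 n₁, RCLike.re ⟪bb i, (e j) (bb i)⟫_ℂ)
      ((Finset.Ico 1 n₁).card : ℝ) := by
    have := hasSum_sum (f := fun j i => RCLike.re ⟪bb i, (e j) (bb i)⟫_ℂ)
      (s := Finset.Ico 1 n₁) (a := fun _ => (1:ℝ)) (fun j _ => hg j)
    simpa using this
  have htot : HasSum (fun i => RCLike.re ⟪bb i, a₁ (bb i)⟫_ℂ)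
      (β * 1 + α * ((Finset.Ico 1 n₁).card : ℝ) + (α - β₁) * 1) := by
    have h := (((hg 0).mul_left β).add (hmid.mul_left α)).add ((hg n₁).mul_left (α - β₁))
    convert h using 2 with i
    · rfl
    rw [ha₁]
    simp only [ContinuousLinearMap.add_apply, ContinuousLinearMap.coe_smul',
      Pi.smul_apply, ContinuousLinearMap.sum_apply, inner_add_right, inner_smul_right,
      inner_sum, map_add]
    have expand : ∀ (r : ℝ) (z : ℂ), RCLike.re ((r : ℂ) * z) = r * RCLike.re z := by
      intro r z; simpa using Complex.re_ofReal_mul r z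
    rw [expand β, expand α, expand (α - β₁)]
    congr 2
    congr 1
    exact map_sum (RCLike.re : ℂ →+ ℝ) _ _
  have hcard : ((Finset.Ico 1 n₁).card : ℝ) = (n₁ : ℝ) - 1 := by
    rw [Nat.card_Ico, Nat.cast_sub hn₁pos, Nat.cast_one]
  have htr : traceAlong bb a₁ = (⌊β + ↑n₁ * α⌋ : ℝ) := by
    rw [traceAlong, htot.tsum_eq, hcard]
    have h2 : β * 1 + α * ((n₁:ℝ) - 1) + (α - β₁) * 1 = β + ↑n₁ * α - β₁ := by ring
    rw [h2, hβ₁]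
    ring
  -- rank bound
  haveI hFD : ∀ j, FiniteDimensional ℂ ↥(LinearMap.range (e j : H →ₗ[ℂ] H)) := fun j =>
    FiniteDimensional.of_finrank_pos (by rw [hrank j]; norm_num)
  set V : Submodule ℂ H := (Finset.range (n₁ + 1)).sup (fun j => LinearMap.range (e j : H →ₗ[ℂ] H)) with hV
  haveI : FiniteDimensional ℂ ↥V :=
    Submodule.finiteDimensional_finset_sup _ _
  have hmem : ∀ (j : ℕ), j ∈ Finset.range (n₁ + 1) → ∀ y : H, (e j) y ∈ V := by
    intro j hj y
    exact Finset.le_sup (f := fun j => LinearMap.range (e j : H →ₗ[ℂ] H)) hj (LinearMap.mem_range_self _ y)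
  have hle : LinearMap.range (a₁ : H →ₗ[ℂ] H) ≤ V := by
    rintro _ ⟨y, rfl⟩
    show a₁ y ∈ V
    rw [ha₁]
    simp only [ContinuousLinearMap.add_apply, ContinuousLinearMap.coe_smul',
      Pi.smul_apply, ContinuousLinearMap.sum_apply]
    refine add_mem (add_mem (Submodule.smul_mem _ _ ?_)
      (Submodule.smul_mem _ _ (Submodule.sum_mem _ fun j hj => ?_)))
      (Submodule.smul_mem _ _ ?_)
    · exact hmem 0 (Finset.mem_range.mpr (Nat.succ_pos _)) y
    · exact hmem j (Finset.mem_range.mpr (lt_trans (Finset.mem_Ico.mp hj).2 (Nat.lt_succ_self _))) y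
    · exact hmem n₁ (Finset.mem_range.mpr (Nat.lt_succ_self _)) y
  have hrk : Module.finrank ℂ ↥(LinearMap.range (a₁ : H →ₗ[ℂ] H)) ≤ n₁ + 1 := by
    refine (Submodule.finrank_mono hle).trans ?_
    refine (finrank_finset_sup_le _ hFD _).trans ?_
    simp [hrank]
  -- final inequalities
  have hfloor1 : 1 ≤ ⌊β + ↑n₁ * α⌋ := le_trans (by omega) hfloor_ge'
  have hfloor2 : ⌊β + ↑n₁ * α⌋ ≤ ⌊α ^ 2 / (α - 1)⌋ := by
    apply Int.floor_le_floor
    have hlt : (n₁ : ℝ) ≤ (1 - β) / (α - 1) + 1 := by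
      rw [hn₁]
      exact le_of_lt (Nat.ceil_lt_add_one (le_of_lt (div_pos (by linarith) hα1)))
    rw [le_div_iff₀ hα1]
    have hc : (1 - β) / (α - 1) * (α - 1) = 1 - β := div_mul_cancel₀ _ (ne_of_gt hα1)
    nlinarith [mul_nonneg (sub_nonneg.mpr hlt) (le_of_lt hα1)]
  refine ⟨hpos, ?_, htr, hfloor1, hfloor2⟩
  rw [htr]
  have : ((n₁ : ℝ) + 1) ≤ (⌊β + ↑n₁ * α⌋ : ℝ) := by exact_mod_cast hfloor_ge'
  calc (Module.finrank ℂ ↥(LinearMap.range (a₁ : H →ₗ[ℂ] H)) : ℝ) ≤ ((n₁ : ℕ) + 1 : ℝ) := by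
        exact_mod_cast hrk
    _ ≤ (⌊β + ↑n₁ * α⌋ : ℝ) := by push_cast; linarith
end
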